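/- arXiv:2007.03664 — 3 statements merged into one kernel-verified Lean document; each statement's English description precedes it below -/
import Mathlib

section
/- For every integer n ≥ 0, the coefficient c(B⁽²⁾;n) is odd if and only if n = 2k² + 2k for some integer k ≥ 0. Moreover, for every N ∈ ℕ, #{0 ≤ n ≤ N : c(B⁽²⁾;n) is odd} = ⌊(√(2N+1) + 1)/2⌋. -/
open PowerSeries Finset
open scoped Classical

noncomputable section

/-- The generalized q-Pochhammer symbol `(a;b)_n = ∏_{j=0}^{n-1} (1 - a·bʲ)`
in the ring `ℤ⟦q⟧` of formal power series (here the variable `q` is `PowerSeries.X`). -/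
def qPoch (a b : PowerSeries ℤ) (n : ℕ) : PowerSeries ℤ :=
  ∏ j ∈ Finset.range n, (1 - a * b ^ j)

/-- Division of formal power series; this is genuine division whenever the denominator
has constant coefficient `1`. -/
def psDiv (f g : PowerSeries ℤ) : PowerSeries ℤ :=
  f * PowerSeries.invOfUnit g 1

/-- The coefficientwise sum of a family of formal power series. -/
def psSum (f : ℕ → PowerSeries ℤ) : PowerSeries ℤ :=
  PowerSeries.mk fun n => ∑' k, PowerSeries.coeff n (f k)

/-- The second order mock theta function
`B⁽²⁾(q) = ∑_{n≥0} qⁿ·(−q;q²)_n / (q;q²)_{n+1}`. -/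
def mockB2 : PowerSeries ℤ :=
  psSum fun n => psDiv (X ^ n * qPoch (-X) (X ^ 2) n) (qPoch X (X ^ 2) (n + 1))

namespace MockAux

lemma isSquare_iff_even_factorization {m : ℕ} (hm : m ≠ 0) :
    IsSquare m ↔ ∀ p, Even (m.factorization p) := by
  constructor
  · rintro ⟨r, rfl⟩
    have hr : r ≠ 0 := by rintro rfl; simp at hm
    intro p
    rw [Nat.factorization_mul hr hr]
    exact ⟨r.factorization p, by simp [two_mul]⟩
  · intro h
    refine ⟨m.factorization.prod fun p k => p ^ (k / 2), ?_⟩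
    rw [← Finsupp.prod_mul]
    have h2 : (m.factorization.prod fun p k => p ^ (k / 2) * p ^ (k / 2))
        = m.factorization.prod fun p k => p ^ k := by
      apply Finsupp.prod_congr
      intro p _
      obtain ⟨c, hc⟩ := h p
      rw [hc, ← pow_add]
      congr 1
      omega
    rw [h2, Nat.factorization_prod_pow_eq_self hm]

lemma odd_card_divisors_iff {m : ℕ} (hm : m ≠ 0) :
    Odd m.divisors.card ↔ IsSquare m := by
  rw [Nat.card_divisors hm, isSquare_iff_even_factorization hm]
  rw [Nat.odd_iff, ← Nat.not_even_iff, even_iff_two_dvd]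
  rw [Nat.Prime.prime Nat.prime_two |>.dvd_finset_prod_iff]
  constructor
  · intro h p
    by_cases hp : p ∈ m.primeFactors
    · by_contra he
      refine h ⟨p, hp, ?_⟩
      rw [even_iff_two_dvd] at he; omega
    · have : m.factorization p = 0 :=
        Finsupp.notMem_support_iff.mp (by rwa [Nat.support_factorization])
      simp [this]
  · rintro h ⟨p, _, hdvd⟩
    have := h p
    rw [Nat.even_iff] at this
    omega

lemma isSquare_odd_iff (N : ℕ) : IsSquare (2 * N + 1) ↔ ∃ k : ℕ, N = 2 * k ^ 2 + 2 * k := by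
  constructor
  · rintro ⟨r, hr⟩
    have hodd : Odd r := by
      rcases Nat.even_or_odd r with he | ho
      · exfalso
        have : Even (r * r) := he.mul_right r
        rw [← hr, Nat.even_iff] at this
        omega
      · exact ho
    obtain ⟨k, rfl⟩ := hodd
    refine ⟨k, ?_⟩
    have : 2 * N + 1 = 4 * k ^ 2 + 4 * k + 1 := by rw [hr]; ring
    nlinarith [this]
  · rintro ⟨k, rfl⟩
    exact ⟨2 * k + 1, by ring⟩

lemma dvd_shift {n N : ℕ} (h : n ≤ N) : (2 * n + 1) ∣ (N - n) ↔ (2 * n + 1) ∣ (2 * N + 1) := by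
  constructor
  · intro hd
    have h2 : 2 * N + 1 = 2 * (N - n) + (2 * n + 1) := by omega
    rw [h2]
    exact Nat.dvd_add (hd.mul_left 2) dvd_rfl
  · intro hd
    have h2 : (2 * n + 1) ∣ 2 * (N - n) := by
      have h3 : 2 * (N - n) = (2 * N + 1) - (2 * n + 1) := by omega
      rw [h3]
      exact Nat.dvd_sub hd dvd_rfl
    have hco : Nat.Coprime (2 * n + 1) 2 :=
      Nat.coprime_comm.mp ((Nat.prime_two.coprime_iff_not_dvd).mpr (by omega))
    exact hco.dvd_of_dvd_mul_left h2

lemma card_filter_dvd (N : ℕ) :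
    ((Finset.range (N + 1)).filter (fun n => (2 * n + 1) ∣ (2 * N + 1))).card
      = (2 * N + 1).divisors.card := by
  apply Finset.card_nbij (i := fun n => 2 * n + 1)
  · intro n hn
    simp only [Finset.mem_coe, Finset.mem_filter, Finset.mem_range] at hn
    simp [Nat.mem_divisors, hn.2]
  · intro a _ b _ hab
    have : 2 * a + 1 = 2 * b + 1 := hab
    omega
  · intro d hd
    simp only [Finset.coe_insert, Nat.mem_divisors, Finset.mem_coe] at hd
    obtain ⟨hdvd, _⟩ := hd
    have hdodd : Odd d := (Nat.odd_iff.mpr (by omega) : Odd (2 * N + 1)).of_dvd_nat hdvd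
    obtain ⟨k, rfl⟩ := hdodd
    have hk : k ≤ N := by
      have := Nat.le_of_dvd (by omega) hdvd
      omega
    exact ⟨k, by simp [Finset.mem_filter, Finset.mem_range, hdvd]; omega, rfl⟩

lemma count_sq (N : ℕ) :
    ((Finset.range (N + 1)).filter (fun n => ∃ k : ℕ, n = 2 * k ^ 2 + 2 * k)).card
      = (Nat.sqrt (2 * N + 1) + 1) / 2 := by
  classical
  set s := Nat.sqrt (2 * N + 1) with hs
  have himg : (Finset.range (N + 1)).filter (fun n => ∃ k : ℕ, n = 2 * k ^ 2 + 2 * k)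
      = (Finset.range ((s + 1) / 2)).image (fun k => 2 * k ^ 2 + 2 * k) := by
    ext n
    simp only [Finset.mem_filter, Finset.mem_range, Finset.mem_image]
    constructor
    · rintro ⟨hn, k, rfl⟩
      refine ⟨k, ?_, rfl⟩
      have h1 : (2 * k + 1) * (2 * k + 1) ≤ 2 * N + 1 := by nlinarith
      have h2 : 2 * k + 1 ≤ s := Nat.le_sqrt.mpr h1
      omega
    · rintro ⟨k, hk, rfl⟩
      refine ⟨?_, k, rfl⟩
      have h2 : 2 * k + 1 ≤ s := by omega
      have h1 : (2 * k + 1) * (2 * k + 1) ≤ 2 * N + 1 := Nat.le_sqrt.mp h2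
      nlinarith
  rw [himg, Finset.card_image_of_injective _ ?_, Finset.card_range]
  intro a b hab
  simp only at hab
  nlinarith [sq_nonneg (a - b : ℤ), hab]

lemma floor_sqrt (N : ℕ) :
    ⌊(Real.sqrt (2 * N + 1) + 1) / 2⌋₊ = (Nat.sqrt (2 * N + 1) + 1) / 2 := by
  set s := Nat.sqrt (2 * N + 1) with hs
  have hsle : (s : ℝ) ≤ Real.sqrt (2 * N + 1) := by
    rw [Real.le_sqrt (by positivity) (by positivity)]
    have h : ((s : ℝ) * s) ≤ 2 * N + 1 := by exact_mod_cast Nat.sqrt_le (2 * N + 1)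
    nlinarith [h]
  have hslt : Real.sqrt (2 * N + 1) < s + 1 := by
    rw [Real.sqrt_lt' (by positivity)]
    have h : (2 * N + 1 : ℝ) < ((s : ℝ) + 1) * (s + 1) := by
      exact_mod_cast Nat.lt_succ_sqrt (2 * N + 1)
    nlinarith [h]
  rw [Nat.floor_eq_iff (by positivity)]
  constructor
  · have h1 : ((s + 1) / 2 : ℕ) * 2 ≤ s + 1 := Nat.div_mul_le_self _ _
    have h1' : (((s + 1) / 2 : ℕ) : ℝ) * 2 ≤ (s : ℝ) + 1 := by exact_mod_cast h1
    linarith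
  · have h2 : s ≤ ((s + 1) / 2 : ℕ) * 2 := by omega
    have h2' : (s : ℝ) ≤ (((s + 1) / 2 : ℕ) : ℝ) * 2 := by exact_mod_cast h2
    linarith


abbrev F : PowerSeries ℤ →+* PowerSeries (ZMod 2) := PowerSeries.map (Int.castRingHom (ZMod 2))

/-- geometric-type series `∑_{d ∣ m} q^m`. -/
def G (d : ℕ) : PowerSeries (ZMod 2) := PowerSeries.mk fun m => if d ∣ m then 1 else 0

lemma geom {d : ℕ} (hd : 0 < d) : (1 - (X : PowerSeries (ZMod 2)) ^ d) * G d = 1 := by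
  ext m
  rw [sub_mul, one_mul, map_sub]
  rcases Nat.eq_zero_or_pos m with rfl | hm
  · rw [coeff_X_pow_mul']
    simp [G, hd.ne']
  · rw [PowerSeries.coeff_one, if_neg hm.ne', coeff_X_pow_mul']
    by_cases h : d ≤ m
    · rw [if_pos h]
      simp only [G, PowerSeries.coeff_mk]
      have hiff : d ∣ m ↔ d ∣ m - d := by
        constructor
        · intro h2; exact Nat.dvd_sub h2 dvd_rfl
        · intro h2
          have := Nat.dvd_add h2 (dvd_refl d)
          rwa [Nat.sub_add_cancel h] at this
      by_cases hdm : d ∣ m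
      · rw [if_pos hdm, if_pos (hiff.mp hdm), sub_self]
      · rw [if_neg hdm, if_neg (fun hc => hdm (hiff.mpr hc)), sub_self]
    · rw [if_neg h, sub_zero]
      simp only [G, PowerSeries.coeff_mk]
      rw [if_neg]
      intro hdm
      exact h (Nat.le_of_dvd hm hdm)

/-- image of the Pochhammer products mod 2 -/
def P (n : ℕ) : PowerSeries (ZMod 2) :=
  ∏ j ∈ Finset.range n, (1 - X * (X : PowerSeries (ZMod 2)) ^ (2 * j))

lemma neg_self (f : PowerSeries (ZMod 2)) : -f = f := by
  ext n
  rw [map_neg, CharTwo.neg_eq]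

lemma F_qPoch_pos (n : ℕ) : F (qPoch X (X ^ 2) n) = P n := by
  unfold qPoch P
  rw [map_prod]
  apply Finset.prod_congr rfl
  intro j _
  rw [map_sub, map_one, map_mul, map_pow, map_pow, PowerSeries.map_X, ← pow_mul]

lemma F_qPoch_neg (n : ℕ) : F (qPoch (-X) (X ^ 2) n) = P n := by
  unfold qPoch P
  rw [map_prod]
  apply Finset.prod_congr rfl
  intro j _
  rw [map_sub, map_one, map_mul, map_neg, map_pow, map_pow, PowerSeries.map_X, ← pow_mul,
    neg_self]

lemma constCoeff_qPoch (n : ℕ) : constantCoeff (qPoch X (X ^ 2) n) = 1 := by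
  unfold qPoch
  rw [map_prod]
  apply Finset.prod_eq_one
  intro j _
  simp

lemma constCoeff_P (n : ℕ) : constantCoeff (P n) = 1 := by
  unfold P
  rw [map_prod]
  apply Finset.prod_eq_one
  intro j _
  simp

lemma P_ne_zero (n : ℕ) : P n ≠ 0 := by
  intro h
  have := constCoeff_P n
  rw [h, map_zero] at this
  simp at this

lemma F_term (n : ℕ) :
    F (psDiv (X ^ n * qPoch (-X) (X ^ 2) n) (qPoch X (X ^ 2) (n + 1)))
      = X ^ n * G (2 * n + 1) := by
  have hinv : qPoch X (X ^ 2) (n + 1) * invOfUnit (qPoch X (X ^ 2) (n + 1)) 1 = 1 :=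
    mul_invOfUnit _ 1 (by rw [constCoeff_qPoch]; rfl)
  have hinv2 : P (n + 1) * F (invOfUnit (qPoch X (X ^ 2) (n + 1)) 1) = 1 := by
    rw [← F_qPoch_pos, ← map_mul, hinv, map_one]
  have hE : F (psDiv (X ^ n * qPoch (-X) (X ^ 2) n) (qPoch X (X ^ 2) (n + 1)))
      = (X ^ n * P n) * F (invOfUnit (qPoch X (X ^ 2) (n + 1)) 1) := by
    unfold psDiv
    rw [map_mul, map_mul, map_pow, PowerSeries.map_X, F_qPoch_neg]
  have hPsucc : P (n + 1) = P n * (1 - X ^ (2 * n + 1)) := by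
    unfold P
    rw [Finset.prod_range_succ, pow_succ']
  apply mul_right_cancel₀ (P_ne_zero (n + 1))
  rw [hE]
  calc (X ^ n * P n) * F (invOfUnit (qPoch X (X ^ 2) (n + 1)) 1) * P (n + 1)
      = (X ^ n * P n) * (P (n + 1) * F (invOfUnit (qPoch X (X ^ 2) (n + 1)) 1)) := by ring
    _ = X ^ n * P n := by rw [hinv2, mul_one]
    _ = (X ^ n * P n) * ((1 - X ^ (2 * n + 1)) * G (2 * n + 1)) := by
        rw [geom (by omega), mul_one]
    _ = X ^ n * G (2 * n + 1) * P (n + 1) := by rw [hPsucc]; ring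

lemma coeff_mockB2_sum (N : ℕ) :
    PowerSeries.coeff N mockB2
      = ∑ n ∈ Finset.range (N + 1),
          PowerSeries.coeff N
            (psDiv (X ^ n * qPoch (-X) (X ^ 2) n) (qPoch X (X ^ 2) (n + 1))) := by
  unfold mockB2 psSum
  rw [PowerSeries.coeff_mk]
  apply tsum_eq_sum
  intro k hk
  have hk' : ¬ k ≤ N := by
    simp only [Finset.mem_range] at hk
    omega
  unfold psDiv
  dsimp only
  rw [mul_assoc, coeff_X_pow_mul', if_neg hk']

lemma coeff_F_mockB2 (N : ℕ) :
    PowerSeries.coeff N (F mockB2) = (((2 * N + 1).divisors.card : ℕ) : ZMod 2) := by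
  rw [PowerSeries.coeff_map, coeff_mockB2_sum, map_sum]
  have hterm : ∀ n ∈ Finset.range (N + 1),
      (Int.castRingHom (ZMod 2))
        (PowerSeries.coeff N (psDiv (X ^ n * qPoch (-X) (X ^ 2) n) (qPoch X (X ^ 2) (n + 1))))
      = if (2 * n + 1) ∣ (2 * N + 1) then (1 : ZMod 2) else 0 := by
    intro n hn
    have hn' : n ≤ N := by
      simp only [Finset.mem_range] at hn
      omega
    rw [← PowerSeries.coeff_map, F_term, coeff_X_pow_mul', if_pos hn']
    unfold G
    rw [PowerSeries.coeff_mk]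
    rw [if_congr (dvd_shift hn') rfl rfl]
  rw [Finset.sum_congr rfl hterm, Finset.sum_boole, card_filter_dvd]

lemma int_odd_iff (z : ℤ) : Odd z ↔ ((z : ℤ) : ZMod 2) = 1 := by
  rw [← Int.not_even_iff_odd, even_iff_two_dvd]
  rw [show ((2:ℤ) ∣ z) ↔ ((z : ZMod 2) = 0) by
    rw [ZMod.intCast_zmod_eq_zero_iff_dvd]; norm_num]
  have h2 : ∀ x : ZMod 2, x = 0 ∨ x = 1 := by decide
  constructor
  · intro h
    rcases h2 (z : ZMod 2) with h0 | h1
    · exact absurd h0 h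
    · exact h1
  · intro h h0
    rw [h0] at h
    exact one_ne_zero h.symm

lemma nat_odd_iff (c : ℕ) : Odd c ↔ ((c : ℕ) : ZMod 2) = 1 := by
  rw [← Nat.not_even_iff_odd, even_iff_two_dvd, ← ZMod.natCast_eq_zero_iff]
  have h2 : ∀ x : ZMod 2, x = 0 ∨ x = 1 := by decide
  constructor
  · intro h
    rcases h2 (c : ZMod 2) with h0 | h1
    · exact absurd h0 h
    · exact h1
  · intro h h0
    rw [h0] at h
    exact one_ne_zero h.symm

lemma key (N : ℕ) :
    Odd (PowerSeries.coeff N mockB2) ↔ ∃ k : ℕ, N = 2 * k ^ 2 + 2 * k := by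
  rw [int_odd_iff]
  rw [show ((PowerSeries.coeff N mockB2 : ℤ) : ZMod 2)
      = PowerSeries.coeff N (F mockB2) by rw [PowerSeries.coeff_map]; rfl]
  rw [coeff_F_mockB2, ← nat_odd_iff, odd_card_divisors_iff (by omega), isSquare_odd_iff]

end MockAux

/-- `c(B⁽²⁾;n)` is odd iff `n = 2k² + 2k` for some `k ≥ 0`; moreover
`#{0 ≤ n ≤ N : c(B⁽²⁾;n) odd} = ⌊(√(2N+1) + 1)/2⌋`. -/
theorem mockB2_parity :
    (∀ n : ℕ, Odd (PowerSeries.coeff n mockB2) ↔ ∃ k : ℕ, n = 2 * k ^ 2 + 2 * k) ∧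
    (∀ N : ℕ, ((Finset.range (N + 1)).filter
        (fun n => Odd (PowerSeries.coeff n mockB2))).card =
      ⌊(Real.sqrt (2 * N + 1) + 1) / 2⌋₊) := by
  refine ⟨MockAux.key, ?_⟩
  intro N
  rw [MockAux.floor_sqrt, ← MockAux.count_sq]
  congr 1
  apply Finset.filter_congr
  intro n _
  simp only [MockAux.key n]
end
end

section
/- For every integer n ≥ 0, c(f⁽³⁾;n) ≡ p(n) (mod 4) and c(φ⁽³⁾;n) ≡ p(n) (mod 2), where p(n) is the number of partitions of n. -/
open PowerSeries Finset
open scoped Classical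

noncomputable section

/-- The third order mock theta function `f⁽³⁾(q) = ∑_{n≥0} q^{n²} / ((−q;q)_n)²`. -/
def mockF3 : PowerSeries ℤ :=
  psSum fun n => psDiv (X ^ (n ^ 2)) ((qPoch (-X) X n) ^ 2)

/-- The third order mock theta function `φ⁽³⁾(q) = ∑_{n≥0} q^{n²} / (−q²;q²)_n`. -/
def mockPhi3 : PowerSeries ℤ :=
  psSum fun n => psDiv (X ^ (n ^ 2)) (qPoch (-(X ^ 2)) (X ^ 2) n)

namespace MockAux

/-- indicator series (copied from Archive/Wiedijk100Theorems/Partition.lean) -/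
def indicatorSeries (α : Type*) [Semiring α] (s : Set ℕ) : PowerSeries α :=
  PowerSeries.mk fun n => if n ∈ s then 1 else 0

theorem coeff_indicator {α : Type*} (s : Set ℕ) [Semiring α] (n : ℕ) :
    coeff n (indicatorSeries α s) = if n ∈ s then 1 else 0 :=
  coeff_mk _ _

variable (α : Type*) [CommRing α]

/-- `PP α k = ∏_{j=1}^{k} (1-X^j)⁻¹` realized as a product of indicator series. -/
def PP (k : ℕ) : PowerSeries α := ∏ j ∈ range k, indicatorSeries α {m | (j + 1) ∣ m}

theorem one_sub_X_pow_mul_indicator (i : ℕ) :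
    ((1 - X ^ (i + 1)) * indicatorSeries α {m | (i + 1) ∣ m} : PowerSeries α) = 1 := by
  ext n
  rw [sub_mul, one_mul, map_sub, PowerSeries.coeff_X_pow_mul', coeff_indicator,
    PowerSeries.coeff_one]
  rcases Nat.eq_zero_or_pos n with rfl | hn
  · simp
  · rw [if_neg hn.ne']
    by_cases hle : i + 1 ≤ n
    · rw [if_pos hle, coeff_indicator]
      simp only [Set.mem_setOf_eq]
      have hiff : (i + 1) ∣ n ↔ (i + 1) ∣ n - (i + 1) := by
        constructor
        · intro h; exact (Nat.dvd_sub h dvd_rfl)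
        · intro h
          have := Nat.sub_add_cancel hle
          rw [← this]
          exact Nat.dvd_add h dvd_rfl
      by_cases hd : (i + 1) ∣ n
      · rw [if_pos hd, if_pos (hiff.mp hd), sub_self]
      · rw [if_neg hd, if_neg (fun hc => hd (hiff.mpr hc)), sub_self]
    · rw [if_neg hle, if_neg, sub_zero]
      intro hd
      simp only [Set.mem_setOf_eq] at hd
      exact hle (Nat.le_of_dvd hn hd)

theorem pochX_mul_PP (k : ℕ) :
    (∏ j ∈ range k, (1 - X ^ (j + 1) : PowerSeries α)) * PP α k = 1 := by
  rw [PP, ← prod_mul_distrib]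
  rw [Finset.prod_eq_one]
  intro j _
  exact one_sub_X_pow_mul_indicator α j

theorem invOfUnit_unique {g h : PowerSeries α} (hg : constantCoeff g = 1)
    (hh : g * h = 1) : invOfUnit g 1 = h := by
  have h1 : g * invOfUnit g 1 = 1 := PowerSeries.mul_invOfUnit g 1 (by simpa using hg)
  calc invOfUnit g 1 = (g * h) * invOfUnit g 1 := by rw [hh, one_mul]
    _ = h * (g * invOfUnit g 1) := by ring
    _ = h := by rw [h1, mul_one]

universe u
variable {ι : Type u}

-- The main workhorse of the partition theorem proof.
theorem partialGF_prop (α : Type*) [CommSemiring α] (n : ℕ) (s : Finset ℕ) (hs : ∀ i ∈ s, 0 < i)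
    (c : ℕ → Set ℕ) (hc : ∀ i, i ∉ s → 0 ∈ c i) :
    #{p : n.Partition | (∀ j, p.parts.count j ∈ c j) ∧ ∀ j ∈ p.parts, j ∈ s} =
      coeff n (∏ i ∈ s, indicatorSeries α ((· * i) '' c i)) := by
  simp_rw [coeff_prod, coeff_indicator, prod_boole, sum_boole]
  apply congr_arg
  simp only [mem_univ, forall_true_left, not_and, not_forall, exists_prop,
    Set.mem_image, not_exists]
  set φ : (a : Nat.Partition n) →
    a ∈ filter (fun p ↦ (∀ (j : ℕ), Multiset.count j p.parts ∈ c j) ∧ ∀ j ∈ p.parts, j ∈ s) univ →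
    ℕ →₀ ℕ := fun p _ => {
      toFun := fun i => Multiset.count i p.parts • i
      support := Finset.filter (fun i => i ≠ 0) p.parts.toFinset
      mem_support_toFun := fun a => by
        simp only [smul_eq_mul, ne_eq, mul_eq_zero, Multiset.count_eq_zero]
        rw [not_or, not_not]
        simp only [Multiset.mem_toFinset, not_not, mem_filter] }
  refine Finset.card_bij φ ?_ ?_ ?_
  · intro a ha
    simp only [φ, not_forall, not_exists, not_and, exists_prop, mem_filter]
    rw [mem_finsuppAntidiag]
    dsimp only [ne_eq, smul_eq_mul, id_eq, eq_mpr_eq_cast, le_eq_subset, Finsupp.coe_mk]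
    simp only [mem_univ, forall_true_left, not_and, not_forall, exists_prop,
      mem_filter, true_and] at ha
    refine ⟨⟨?_, fun i ↦ ?_⟩, fun i _ ↦ ⟨a.parts.count i, ha.1 i, rfl⟩⟩
    · conv_rhs => simp [← a.parts_sum]
      rw [sum_multiset_count_of_subset _ s]
      · simp only [smul_eq_mul]
      · intro i
        simp only [Multiset.mem_toFinset, not_not, mem_filter]
        apply ha.2
    · simp only [ne_eq, Multiset.mem_toFinset, not_not, mem_filter, and_imp]
      exact fun hi _ ↦ ha.2 i hi
  · intro p₁ hp₁ p₂ hp₂ h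
    apply Nat.Partition.ext
    simp only [true_and, mem_univ, mem_filter] at hp₁ hp₂
    ext i
    simp only [φ, ne_eq, Multiset.mem_toFinset, not_not, smul_eq_mul, Finsupp.mk.injEq] at h
    by_cases hi : i = 0
    · rw [hi]
      rw [Multiset.count_eq_zero_of_notMem]
      · rw [Multiset.count_eq_zero_of_notMem]
        intro a; exact Nat.lt_irrefl 0 (hs 0 (hp₂.2 0 a))
      intro a; exact Nat.lt_irrefl 0 (hs 0 (hp₁.2 0 a))
    · rw [← mul_left_inj' hi]
      rw [funext_iff] at h
      exact h.2 i
  · simp only [φ, mem_filter, mem_finsuppAntidiag, mem_univ, exists_prop, true_and, and_assoc]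
    rintro f ⟨hf, hf₃, hf₄⟩
    have hf' : f ∈ finsuppAntidiag s n := mem_finsuppAntidiag.mpr ⟨hf, hf₃⟩
    simp only [mem_finsuppAntidiag] at hf'
    refine ⟨⟨∑ i ∈ s, Multiset.replicate (f i / i) i, ?_, ?_⟩, ?_, ?_, ?_⟩
    · intro i hi
      simp only [exists_prop, Multiset.mem_sum, mem_map, Function.Embedding.coeFn_mk] at hi
      rcases hi with ⟨t, ht, z⟩
      apply hs
      rwa [Multiset.eq_of_mem_replicate z]
    · simp_rw [Multiset.sum_sum, Multiset.sum_replicate, Nat.nsmul_eq_mul]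
      rw [← hf'.1]
      refine sum_congr rfl fun i hi => Nat.div_mul_cancel ?_
      rcases hf₄ i hi with ⟨w, _, hw₂⟩
      rw [← hw₂]
      exact dvd_mul_left _ _
    · intro i
      simp_rw [Multiset.count_sum', Multiset.count_replicate, sum_ite_eq']
      split_ifs with h
      · rcases hf₄ i h with ⟨w, hw₁, hw₂⟩
        rwa [← hw₂, Nat.mul_div_cancel _ (hs i h)]
      · exact hc _ h
    · intro i hi
      rw [Multiset.mem_sum] at hi
      rcases hi with ⟨j, hj₁, hj₂⟩
      rwa [Multiset.eq_of_mem_replicate hj₂]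
    · ext i
      simp_rw [Multiset.count_sum', Multiset.count_replicate, sum_ite_eq']
      simp only [ne_eq, Multiset.mem_toFinset, not_not, smul_eq_mul, ite_mul,
        zero_mul, Finsupp.coe_mk]
      split_ifs with h
      · apply Nat.div_mul_cancel
        rcases hf₄ i h with ⟨w, _, hw₂⟩
        apply Dvd.intro_left _ hw₂
      · apply symm
        rw [← Finsupp.notMem_support_iff]
        exact notMem_mono hf'.2 h


/-- number of partitions of `n` with all parts `≤ k` -/
def Acard (k n : ℕ) : ℕ := #(univ.filter fun p : n.Partition => ∀ j ∈ p.parts, j ≤ k)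

/-- number of partitions of `n` with at most `k` parts -/
def Bcard (k n : ℕ) : ℕ := #(univ.filter fun p : n.Partition => Multiset.card p.parts ≤ k)

theorem coeff_PP (k n : ℕ) : coeff n (PP α k) = (Acard k n : α) := by
  have h := partialGF_prop α n ((range k).map ⟨Nat.succ, Nat.succ_injective⟩)
    (by
      intro i hi
      rcases Finset.mem_map.mp hi with ⟨a, _, rfl⟩
      exact Nat.succ_pos a)
    (fun _ => Set.univ) (fun _ _ => trivial)
  rw [Finset.prod_map] at h
  have hprod : ∀ j ∈ range k,
      indicatorSeries α ((· * ((⟨Nat.succ, Nat.succ_injective⟩ : ℕ ↪ ℕ) j)) '' Set.univ) =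
        indicatorSeries α {m | (j + 1) ∣ m} := by
    intro j _
    have hset : ((· * ((⟨Nat.succ, Nat.succ_injective⟩ : ℕ ↪ ℕ) j)) '' Set.univ) =
        {m | (j + 1) ∣ m} := by
      ext m
      simp only [Set.mem_image, Set.mem_univ, true_and, Set.mem_setOf_eq,
        Function.Embedding.coeFn_mk]
      constructor
      · rintro ⟨c, rfl⟩
        exact dvd_mul_left _ _
      · rintro ⟨c, rfl⟩
        exact ⟨c, mul_comm _ _⟩
    rw [hset]
  rw [Finset.prod_congr rfl hprod] at h
  rw [PP, ← h, Acard]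
  norm_cast
  congr 1
  congr 1
  apply Finset.filter_congr
  intro p _
  simp only [Set.mem_univ, forall_const, true_and, Finset.mem_map, Finset.mem_range,
    Function.Embedding.coeFn_mk]
  constructor
  · intro hall j hj
    rcases hall j hj with ⟨a, ha, rfl⟩
    exact ha
  · intro hall j hj
    have h1 : 1 ≤ j := p.parts_pos hj
    have h2 := hall j hj
    exact ⟨j - 1, by omega, by omega⟩

theorem msum_map_add (s : Multiset ℕ) (c : ℕ) :
    (s.map (· + c)).sum = s.sum + Multiset.card s * c := by
  induction s using Multiset.induction_on with
  | empty => simp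
  | cons a s ih => simp [ih]; ring

theorem msum_map_sub (s : Multiset ℕ) (c : ℕ) (h : ∀ x ∈ s, c ≤ x) :
    (s.map (· - c)).sum + Multiset.card s * c = s.sum := by
  induction s using Multiset.induction_on with
  | empty => simp
  | cons a s ih =>
    have ha : c ≤ a := h a (Multiset.mem_cons_self a s)
    have ih' := ih fun x hx => h x (Multiset.mem_cons_of_mem hx)
    simp only [Multiset.map_cons, Multiset.sum_cons, Multiset.card_cons]
    rw [add_mul, one_mul]
    omega

theorem map_sub_one_add_one (s : Multiset ℕ) (h : ∀ x ∈ s, 1 ≤ x) :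
    (s.map (· - 1)).map (· + 1) = s := by
  induction s using Multiset.induction_on with
  | empty => simp
  | cons a s ih =>
    have ha : 1 ≤ a := h a (Multiset.mem_cons_self a s)
    have ih' := ih fun x hx => h x (Multiset.mem_cons_of_mem hx)
    simp only [Multiset.map_cons, ih', Multiset.cons_inj_left]
    omega

theorem map_add_one_sub_one (s : Multiset ℕ) :
    (s.map (· + 1)).map (· - 1) = s := by
  induction s using Multiset.induction_on with
  | empty => simp
  | cons a s ih => simp only [Multiset.map_cons, ih, Multiset.cons_inj_left]; omega

theorem mcard_le_sum (s : Multiset ℕ) (h : ∀ x ∈ s, 1 ≤ x) :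
    Multiset.card s ≤ s.sum := by
  induction s using Multiset.induction_on with
  | empty => simp
  | cons a s ih =>
    have ha : 1 ≤ a := h a (Multiset.mem_cons_self a s)
    have ih' := ih fun x hx => h x (Multiset.mem_cons_of_mem hx)
    simp only [Multiset.sum_cons, Multiset.card_cons]
    omega

theorem Acard_stab (k n : ℕ) (h : n < k + 1) : Acard (k + 1) n = Acard k n := by
  rw [Acard, Acard]
  congr 1
  apply Finset.filter_congr
  intro p _
  constructor
  · intro hall j hj
    have h1 := hall j hj
    have h2 : j ≤ n := by
      rw [← p.parts_sum]
      exact Multiset.single_le_sum (fun x _ => Nat.zero_le x) j hj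
    omega
  · intro hall j hj
    exact (hall j hj).trans (Nat.le_succ k)

theorem Bcard_stab (k n : ℕ) (h : n < k + 1) : Bcard (k + 1) n = Bcard k n := by
  rw [Bcard, Bcard]
  congr 1
  apply Finset.filter_congr
  intro p _
  have hcs : Multiset.card p.parts ≤ n := by
    have h0 : Multiset.card p.parts ≤ p.parts.sum := mcard_le_sum _ fun x hx => p.parts_pos hx
    rw [p.parts_sum] at h0
    exact h0
  constructor
  · intro _; omega
  · intro h2; omega

theorem Acard_succ (k n : ℕ) (h : k + 1 ≤ n) :
    Acard (k + 1) n = Acard k n + Acard (k + 1) (n - (k + 1)) := by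
  classical
  rw [Acard, ← Finset.card_filter_add_card_filter_not
    (p := fun p : n.Partition => (k + 1) ∈ p.parts), add_comm]
  congr 1
  · -- partitions with parts ≤ k+1 and no part equal to k+1  = parts ≤ k
    rw [Finset.filter_filter, Acard]
    congr 1
    apply Finset.filter_congr
    intro p _
    constructor
    · rintro ⟨hall, hnot⟩ j hj
      have := hall j hj
      have : j ≠ k + 1 := fun hc => hnot (hc ▸ hj)
      omega
    · intro hall
      refine ⟨fun j hj => (hall j hj).trans (Nat.le_succ k), fun hc => ?_⟩
      have := hall _ hc
      omega
  · -- partitions with parts ≤ k+1 containing k+1  ≃  partitions of n-(k+1) with parts ≤ k+1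
    rw [Finset.filter_filter, Acard]
    refine Finset.card_bij'
      (fun p hp => (⟨p.parts.erase (k + 1),
        fun {x} hx => p.parts_pos (Multiset.mem_of_mem_erase hx),
        by
          have hmem : (k + 1) ∈ p.parts := (Finset.mem_filter.mp hp).2.2
          have hc := congrArg Multiset.sum (Multiset.cons_erase hmem)
          rw [Multiset.sum_cons, p.parts_sum] at hc
          omega⟩ : (n - (k + 1)).Partition))
      (fun q hq => (⟨(k + 1) ::ₘ q.parts,
        fun {x} hx => by
          rcases Multiset.mem_cons.mp hx with rfl | hx'
          · omega
          · exact q.parts_pos hx',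
        by rw [Multiset.sum_cons, q.parts_sum]; omega⟩ : n.Partition))
      ?_ ?_ ?_ ?_
    · -- forward membership
      intro p hp
      simp only [Finset.mem_filter, Finset.mem_univ, true_and] at hp ⊢
      intro j hj
      exact hp.1 j (Multiset.mem_of_mem_erase hj)
    · -- backward membership
      intro q hq
      simp only [Finset.mem_filter, Finset.mem_univ, true_and] at hq ⊢
      refine ⟨fun j hj => ?_, Multiset.mem_cons_self _ _⟩
      rcases Multiset.mem_cons.mp hj with rfl | hj'
      · exact le_rfl
      · exact hq j hj'
    · -- left inverse
      intro p hp
      apply Nat.Partition.ext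
      simp only
      exact Multiset.cons_erase (Finset.mem_filter.mp hp).2.2
    · -- right inverse
      intro q hq
      apply Nat.Partition.ext
      simp only
      exact Multiset.erase_cons_head _ _

theorem Bcard_succ (k n : ℕ) (h : k + 1 ≤ n) :
    Bcard (k + 1) n = Bcard k n + Bcard (k + 1) (n - (k + 1)) := by
  classical
  rw [Bcard, ← Finset.card_filter_add_card_filter_not
    (p := fun p : n.Partition => Multiset.card p.parts ≤ k)]
  congr 1
  · -- card ≤ k+1 and card ≤ k  = card ≤ k
    rw [Finset.filter_filter, Bcard]
    congr 1
    apply Finset.filter_congr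
    intro p _
    constructor
    · rintro ⟨_, h2⟩; exact h2
    · intro h2; exact ⟨h2.trans (Nat.le_succ k), h2⟩
  · -- card = k+1 partitions of n  ≃  partitions of n - (k+1) with card ≤ k+1
    rw [Finset.filter_filter, Bcard]
    refine Finset.card_bij'
      (fun p hp => (⟨(p.parts.filter (fun x => 2 ≤ x)).map (· - 1),
        fun {x} hx => by
          rcases Multiset.mem_map.mp hx with ⟨y, hy, rfl⟩
          have := (Multiset.mem_filter.mp hy).2
          omega,
        by
          have hp' := (Finset.mem_filter.mp hp).2
          have hcard : Multiset.card p.parts = k + 1 := by omega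
          have hfg : p.parts.filter (fun x => 2 ≤ x) + p.parts.filter (fun x => ¬ 2 ≤ x) =
              p.parts := Multiset.filter_add_not _ _
          have hsum : (p.parts.filter (fun x => 2 ≤ x)).sum +
              (p.parts.filter (fun x => ¬ 2 ≤ x)).sum = n := by
            rw [← Multiset.sum_add, hfg, p.parts_sum]
          have hcards : Multiset.card (p.parts.filter (fun x => 2 ≤ x)) +
              Multiset.card (p.parts.filter (fun x => ¬ 2 ≤ x)) = k + 1 := by
            rw [← Multiset.card_add, hfg, hcard]
          have hg1 : (p.parts.filter (fun x => ¬ 2 ≤ x)).sum =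
              Multiset.card (p.parts.filter (fun x => ¬ 2 ≤ x)) := by
            have hrep : ∀ b ∈ p.parts.filter (fun x => ¬ 2 ≤ x), b = 1 := by
              intro b hb
              have h1 := p.parts_pos (Multiset.mem_of_le (Multiset.filter_le _ _) hb)
              have h2 := (Multiset.mem_filter.mp hb).2
              omega
            conv_lhs => rw [Multiset.eq_replicate_card.mpr hrep]
            rw [Multiset.sum_replicate, smul_eq_mul, mul_one]
          have hms := msum_map_sub (p.parts.filter (fun x => 2 ≤ x)) 1 (fun x hx => by
            have := (Multiset.mem_filter.mp hx).2; omega)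
          omega⟩ : (n - (k + 1)).Partition))
      (fun q hq => (⟨q.parts.map (· + 1) + Multiset.replicate (k + 1 - Multiset.card q.parts) 1,
        fun {x} hx => by
          rcases Multiset.mem_add.mp hx with hx' | hx'
          · rcases Multiset.mem_map.mp hx' with ⟨y, _, rfl⟩; omega
          · rw [Multiset.eq_of_mem_replicate hx']; exact Nat.one_pos,
        by
          have hq' := (Finset.mem_filter.mp hq).2
          rw [Multiset.sum_add, msum_map_add, q.parts_sum, Multiset.sum_replicate, smul_eq_mul,
            mul_one]
          omega⟩ : n.Partition))
      ?_ ?_ ?_ ?_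
    · -- forward membership
      intro p hp
      simp only [Finset.mem_filter, Finset.mem_univ, true_and] at hp ⊢
      rw [Multiset.card_map]
      have := Multiset.card_le_card (Multiset.filter_le (fun x => 2 ≤ x) p.parts)
      omega
    · -- backward membership
      intro q hq
      simp only [Finset.mem_filter, Finset.mem_univ, true_and] at hq ⊢
      rw [Multiset.card_add, Multiset.card_map, Multiset.card_replicate]
      omega
    · -- left inverse
      intro p hp
      simp only [Finset.mem_filter, Finset.mem_univ, true_and] at hp
      apply Nat.Partition.ext
      simp only
      have hmm : ((p.parts.filter (fun x => 2 ≤ x)).map (· - 1)).map (· + 1) =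
          p.parts.filter (fun x => 2 ≤ x) :=
        map_sub_one_add_one _ (fun x hx => by
          have := (Multiset.mem_filter.mp hx).2
          omega)
      rw [hmm, Multiset.card_map]
      have hg1 : p.parts.filter (fun x => ¬ 2 ≤ x) =
          Multiset.replicate (Multiset.card (p.parts.filter (fun x => ¬ 2 ≤ x))) 1 := by
        apply Multiset.eq_replicate_card.mpr
        intro b hb
        have h1 := p.parts_pos (Multiset.mem_of_le (Multiset.filter_le _ _) hb)
        have h2 := (Multiset.mem_filter.mp hb).2
        omega
      have hfg : p.parts.filter (fun x => 2 ≤ x) + p.parts.filter (fun x => ¬ 2 ≤ x) =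
          p.parts := Multiset.filter_add_not _ _
      have hcards : Multiset.card (p.parts.filter (fun x => 2 ≤ x)) +
          Multiset.card (p.parts.filter (fun x => ¬ 2 ≤ x)) = k + 1 := by
        rw [← Multiset.card_add, hfg]; omega
      rw [show k + 1 - Multiset.card (p.parts.filter (fun x => 2 ≤ x)) =
        Multiset.card (p.parts.filter (fun x => ¬ 2 ≤ x)) from by omega, ← hg1, hfg]
    · -- right inverse
      intro q hq
      simp only [Finset.mem_filter, Finset.mem_univ, true_and] at hq
      apply Nat.Partition.ext
      simp only
      have e1 : (q.parts.map (· + 1)).filter (fun x => 2 ≤ x) = q.parts.map (· + 1) := by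
        apply Multiset.filter_eq_self.mpr
        intro x hx
        rcases Multiset.mem_map.mp hx with ⟨y, hy, rfl⟩
        have := q.parts_pos hy
        omega
      have e2 : (Multiset.replicate (k + 1 - Multiset.card q.parts) 1).filter
          (fun x => 2 ≤ x) = 0 := by
        apply Multiset.filter_eq_nil.mpr
        intro x hx
        rw [Multiset.eq_of_mem_replicate hx]
        omega
      have hfilt : (q.parts.map (· + 1) +
          Multiset.replicate (k + 1 - Multiset.card q.parts) 1).filter (fun x => 2 ≤ x) =
          q.parts.map (· + 1) := by
        rw [Multiset.filter_add, e1, e2, add_zero]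
      rw [hfilt, map_add_one_sub_one]

theorem Acard_eq_Bcard (k n : ℕ) : Acard k n = Bcard k n := by
  induction k generalizing n with
  | zero =>
    rw [Acard, Bcard]
    congr 1
    apply Finset.filter_congr
    intro p _
    constructor
    · intro hall
      rw [Nat.le_zero, Multiset.card_eq_zero]
      by_contra hne
      rcases Multiset.exists_mem_of_ne_zero hne with ⟨j, hj⟩
      have := p.parts_pos hj
      have := hall j hj
      omega
    · intro hcard j hj
      rw [Nat.le_zero, Multiset.card_eq_zero] at hcard
      rw [hcard] at hj
      simp at hj
  | succ k ihk =>
    induction n using Nat.strong_induction_on with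
    | _ n ih =>
      by_cases h : k + 1 ≤ n
      · rw [Acard_succ k n h, Bcard_succ k n h, ihk n, ih (n - (k + 1)) (by omega)]
      · rw [Acard_stab k n (by omega), Bcard_stab k n (by omega), ihk n]

/-- `mfun s i` = number of elements of `s` that are `≥ i` (the conjugate partition). -/
def mfun (s : Multiset ℕ) (i : ℕ) : ℕ := Multiset.card (s.filter (fun x => i ≤ x))

/-- The size of the Durfee square of a partition. -/
def durfee (s : Multiset ℕ) : ℕ := Nat.findGreatest (fun i => i ≤ mfun s i) (Multiset.card s)

theorem mfun_le_card (s : Multiset ℕ) (i : ℕ) : mfun s i ≤ Multiset.card s :=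
  Multiset.card_le_card (Multiset.filter_le _ _)

theorem mfun_anti (s : Multiset ℕ) {i j : ℕ} (hij : i ≤ j) : mfun s j ≤ mfun s i :=
  Multiset.card_le_card (Multiset.monotone_filter_right s (fun x hx => le_trans hij hx))

theorem le_durfee_iff (s : Multiset ℕ) (i : ℕ) : i ≤ durfee s ↔ i ≤ mfun s i := by
  constructor
  · intro h
    have hd : durfee s ≤ mfun s (durfee s) :=
      Nat.findGreatest_spec (P := fun i => i ≤ mfun s i) (n := Multiset.card s)
        (Nat.zero_le _) (Nat.zero_le _)
    exact le_trans h (le_trans hd (mfun_anti s h))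
  · intro h
    exact Nat.le_findGreatest (le_trans h (mfun_le_card s i)) h

theorem durfee_eq (s : Multiset ℕ) (k : ℕ) (h1 : k ≤ mfun s k) (h2 : mfun s (k + 1) ≤ k) :
    durfee s = k := by
  have hk : k ≤ durfee s := (le_durfee_iff s k).mpr h1
  have hk2 : ¬ (k + 1 ≤ durfee s) := fun hc => by
    have := (le_durfee_iff s (k + 1)).mp hc
    omega
  omega

theorem mconst_mul_card_le_sum (s : Multiset ℕ) (c : ℕ) (h : ∀ x ∈ s, c ≤ x) :
    c * Multiset.card s ≤ s.sum := by
  induction s using Multiset.induction_on with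
  | empty => simp
  | cons a s ih =>
    have ha : c ≤ a := h a (Multiset.mem_cons_self a s)
    have ih' := ih fun x hx => h x (Multiset.mem_cons_of_mem hx)
    simp only [Multiset.sum_cons, Multiset.card_cons]
    rw [mul_add, mul_one]
    omega

theorem map_sub_add_cancel (s : Multiset ℕ) (c : ℕ) (h : ∀ x ∈ s, c ≤ x) :
    (s.map (· - c)).map (· + c) = s := by
  induction s using Multiset.induction_on with
  | empty => simp
  | cons a s ih =>
    have ha : c ≤ a := h a (Multiset.mem_cons_self a s)
    have ih' := ih fun x hx => h x (Multiset.mem_cons_of_mem hx)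
    simp only [Multiset.map_cons, ih', Multiset.cons_inj_left]
    omega

theorem map_add_sub_cancel (s : Multiset ℕ) (c : ℕ) :
    (s.map (· + c)).map (· - c) = s := by
  induction s using Multiset.induction_on with
  | empty => simp
  | cons a s ih => simp only [Multiset.map_cons, ih, Multiset.cons_inj_left]; omega

theorem durfee_sq_le_sum (s : Multiset ℕ) : durfee s ^ 2 ≤ s.sum := by
  set k := durfee s with hk
  have h1 : k ≤ mfun s k := (le_durfee_iff s k).mp le_rfl
  have h2 : k * mfun s k ≤ (s.filter (fun x => k ≤ x)).sum :=
    mconst_mul_card_le_sum _ k (fun x hx => (Multiset.mem_filter.mp hx).2)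
  have h3 : (s.filter (fun x => k ≤ x)).sum + (s.filter (fun x => ¬ k ≤ x)).sum = s.sum := by
    rw [← Multiset.sum_add, Multiset.filter_add_not]
  have h4 : k * k ≤ k * mfun s k := Nat.mul_le_mul_left k h1
  rw [pow_two]
  omega

theorem replicate_le_small (s : Multiset ℕ) (k : ℕ) (hk : k ≤ mfun s k) :
    Multiset.replicate (k - mfun s (k + 1)) k ≤ s.filter (fun x => ¬ (k + 1 ≤ x)) := by
  set t := mfun s (k + 1) with ht
  have key : mfun s k ≤ t + Multiset.count k s := by
    have hsplit : (s.filter (fun x => k ≤ x)).filter (fun x => k + 1 ≤ x) +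
        (s.filter (fun x => k ≤ x)).filter (fun x => ¬ (k + 1 ≤ x)) =
        s.filter (fun x => k ≤ x) := Multiset.filter_add_not _ _
    have hc := congrArg Multiset.card hsplit
    rw [Multiset.card_add] at hc
    have h1 : Multiset.card ((s.filter (fun x => k ≤ x)).filter (fun x => k + 1 ≤ x)) ≤ t := by
      rw [ht, mfun]
      apply Multiset.card_le_card
      rw [Multiset.filter_filter]
      exact Multiset.monotone_filter_right s (fun x hx => hx.1)
    have h2 : Multiset.card ((s.filter (fun x => k ≤ x)).filter (fun x => ¬ (k + 1 ≤ x))) ≤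
        Multiset.count k s := by
      rw [Multiset.count_eq_card_filter_eq]
      apply Multiset.card_le_card
      rw [Multiset.filter_filter]
      exact Multiset.monotone_filter_right s (fun x hx => by omega)
    rw [mfun]
    omega
  refine Multiset.le_iff_count.mpr fun a => ?_
  rw [Multiset.count_replicate]
  split_ifs with ha
  · subst ha
    rw [Multiset.count_filter_of_pos (by omega)]
    omega
  · exact Nat.zero_le _

theorem filter_recomb_small (k c : ℕ) (μp νp : Multiset ℕ) (hμ : ∀ x ∈ μp, x ≤ k)
    (hν : ∀ x ∈ νp, 0 < x) :
    (μp + (Multiset.replicate c k + νp.map (· + k))).filter (fun x => ¬ (k + 1 ≤ x)) =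
      μp + Multiset.replicate c k := by
  rw [Multiset.filter_add, Multiset.filter_add]
  have e1 : μp.filter (fun x => ¬ (k + 1 ≤ x)) = μp :=
    Multiset.filter_eq_self.mpr (fun x hx => by have := hμ x hx; omega)
  have e2 : (Multiset.replicate c k).filter (fun x => ¬ (k + 1 ≤ x)) = Multiset.replicate c k :=
    Multiset.filter_eq_self.mpr (fun x hx => by
      rw [Multiset.eq_of_mem_replicate hx]; omega)
  have e3 : (νp.map (· + k)).filter (fun x => ¬ (k + 1 ≤ x)) = 0 :=
    Multiset.filter_eq_nil.mpr (fun x hx => by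
      rcases Multiset.mem_map.mp hx with ⟨y, hy, rfl⟩
      have := hν y hy
      omega)
  rw [e1, e2, e3, add_zero]

theorem filter_recomb_big (k c : ℕ) (μp νp : Multiset ℕ) (hμ : ∀ x ∈ μp, x ≤ k)
    (hν : ∀ x ∈ νp, 0 < x) :
    (μp + (Multiset.replicate c k + νp.map (· + k))).filter (fun x => k + 1 ≤ x) =
      νp.map (· + k) := by
  rw [Multiset.filter_add, Multiset.filter_add]
  have e1 : μp.filter (fun x => k + 1 ≤ x) = 0 :=
    Multiset.filter_eq_nil.mpr (fun x hx => by have := hμ x hx; omega)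
  have e2 : (Multiset.replicate c k).filter (fun x => k + 1 ≤ x) = 0 :=
    Multiset.filter_eq_nil.mpr (fun x hx => by
      rw [Multiset.eq_of_mem_replicate hx]; omega)
  have e3 : (νp.map (· + k)).filter (fun x => k + 1 ≤ x) = νp.map (· + k) :=
    Multiset.filter_eq_self.mpr (fun x hx => by
      rcases Multiset.mem_map.mp hx with ⟨y, hy, rfl⟩
      have := hν y hy
      omega)
  rw [e1, e2, e3, zero_add, zero_add]

theorem durfee_recomb (k : ℕ) (μp νp : Multiset ℕ) (hμ : ∀ x ∈ μp, x ≤ k)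
    (hν : ∀ x ∈ νp, 0 < x) (hc : Multiset.card νp ≤ k) :
    durfee (μp + (Multiset.replicate (k - Multiset.card νp) k + νp.map (· + k))) = k := by
  set c := Multiset.card νp with hcdef
  apply durfee_eq
  · rw [mfun, Multiset.filter_add, Multiset.filter_add]
    have e2 : (Multiset.replicate (k - c) k).filter (fun x => k ≤ x) =
        Multiset.replicate (k - c) k :=
      Multiset.filter_eq_self.mpr (fun x hx => by
        rw [Multiset.eq_of_mem_replicate hx])
    have e3 : (νp.map (· + k)).filter (fun x => k ≤ x) = νp.map (· + k) :=
      Multiset.filter_eq_self.mpr (fun x hx => by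
        rcases Multiset.mem_map.mp hx with ⟨y, _, rfl⟩
        omega)
    rw [e2, e3, Multiset.card_add, Multiset.card_add, Multiset.card_replicate,
      Multiset.card_map]
    omega
  · rw [mfun, filter_recomb_big k (k - c) μp νp hμ hν, Multiset.card_map]
    omega

theorem sigma_pair_eq {a b a' b' : ℕ} (μ : Nat.Partition a) (ν : Nat.Partition b)
    (μ' : Nat.Partition a') (ν' : Nat.Partition b')
    (h1 : μ.parts = μ'.parts) (h2 : ν.parts = ν'.parts) :
    (⟨(a, b), (μ, ν)⟩ : (ab : ℕ × ℕ) × (Nat.Partition ab.1 × Nat.Partition ab.2)) =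
      ⟨(a', b'), (μ', ν')⟩ := by
  have ha : a = a' := by rw [← μ.parts_sum, ← μ'.parts_sum, h1]
  have hb : b = b' := by rw [← ν.parts_sum, ← ν'.parts_sum, h2]
  subst ha
  subst hb
  rw [Nat.Partition.ext h1, Nat.Partition.ext h2]

theorem card_partition_durfee (n : ℕ) :
    Fintype.card n.Partition =
      ∑ k ∈ range (n + 1), if k ^ 2 ≤ n then
        ∑ ab ∈ antidiagonal (n - k ^ 2), Acard k ab.1 * Bcard k ab.2 else 0 := by
  classical
  have hfib : ∀ p : n.Partition, p ∈ (univ : Finset n.Partition) →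
      durfee p.parts ∈ range (n + 1) := by
    intro p _
    rw [Finset.mem_range]
    have h1 : durfee p.parts ≤ Multiset.card p.parts := Nat.findGreatest_le _
    have h2 : Multiset.card p.parts ≤ p.parts.sum := mcard_le_sum _ (fun x hx => p.parts_pos hx)
    rw [p.parts_sum] at h2
    omega
  rw [← Finset.card_univ, Finset.card_eq_sum_card_fiberwise hfib]
  refine Finset.sum_congr rfl fun k _ => ?_
  by_cases hkn : k ^ 2 ≤ n
  · rw [if_pos hkn]
    have hT : ∑ ab ∈ antidiagonal (n - k ^ 2), Acard k ab.1 * Bcard k ab.2 =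
        ((antidiagonal (n - k ^ 2)).sigma (fun ab =>
          (univ.filter fun μ : Nat.Partition ab.1 => ∀ j ∈ μ.parts, j ≤ k) ×ˢ
          (univ.filter fun ν : Nat.Partition ab.2 => Multiset.card ν.parts ≤ k))).card := by
      rw [Finset.card_sigma]
      exact Finset.sum_congr rfl fun ab _ => by rw [Finset.card_product]; rfl
    rw [hT]
    refine Finset.card_bij'
      (fun p hp =>
        ⟨((p.parts.filter (fun x => ¬ (k + 1 ≤ x)) -
            Multiset.replicate (k - mfun p.parts (k + 1)) k).sum,
          ((p.parts.filter (fun x => k + 1 ≤ x)).map (· - k)).sum),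
         (⟨p.parts.filter (fun x => ¬ (k + 1 ≤ x)) -
            Multiset.replicate (k - mfun p.parts (k + 1)) k,
           fun {x} hx => p.parts_pos (Multiset.mem_of_le (Multiset.filter_le _ _)
             (Multiset.mem_of_le tsub_le_self hx)), rfl⟩,
          ⟨(p.parts.filter (fun x => k + 1 ≤ x)).map (· - k),
           fun {x} hx => by
             rcases Multiset.mem_map.mp hx with ⟨y, hy, rfl⟩
             have := (Multiset.mem_filter.mp hy).2
             omega, rfl⟩)⟩)
      (fun x hx =>
        ⟨x.2.1.parts + (Multiset.replicate (k - Multiset.card x.2.2.parts) k +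
            x.2.2.parts.map (· + k)),
         fun {y} hy => by
           rcases Multiset.mem_add.mp hy with hy' | hy'
           · exact x.2.1.parts_pos hy'
           · rcases Multiset.mem_add.mp hy' with hy'' | hy''
             · rcases (Multiset.mem_replicate.mp hy'') with ⟨hne, rfl⟩
               omega
             · rcases Multiset.mem_map.mp hy'' with ⟨z, hz, rfl⟩
               have := x.2.2.parts_pos hz
               omega,
         by
           have hx' := Finset.mem_sigma.mp hx
           have hab : x.1.1 + x.1.2 = n - k ^ 2 := Finset.HasAntidiagonal.mem_antidiagonal.mp hx'.1
           have hν : Multiset.card x.2.2.parts ≤ k :=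
             (Finset.mem_filter.mp (Finset.mem_product.mp hx'.2).2).2
           rw [Multiset.sum_add, Multiset.sum_add, Multiset.sum_replicate, smul_eq_mul,
             msum_map_add, x.2.1.parts_sum, x.2.2.parts_sum]
           have hsq : (k - Multiset.card x.2.2.parts) * k + Multiset.card x.2.2.parts * k =
               k * k := by
             rw [← add_mul]
             congr 1
             omega
           have hk2 : k ^ 2 = k * k := pow_two k
           omega⟩)
      ?_ ?_ ?_ ?_
    · -- forward membership
      intro p hp
      have hd : durfee p.parts = k := (Finset.mem_filter.mp hp).2
      set t := mfun p.parts (k + 1) with htdef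
      have ht : t ≤ k := by
        by_contra hc
        have := (le_durfee_iff p.parts (k + 1)).mpr (by omega)
        omega
      have hmk : k ≤ mfun p.parts k := (le_durfee_iff p.parts k).mp (le_of_eq hd.symm)
      have hrep := replicate_le_small p.parts k hmk
      have hsmall : (p.parts.filter (fun x => ¬ (k + 1 ≤ x)) -
          Multiset.replicate (k - t) k).sum + (k - t) * k =
          (p.parts.filter (fun x => ¬ (k + 1 ≤ x))).sum := by
        have := congrArg Multiset.sum (tsub_add_cancel_of_le hrep)
        rw [Multiset.sum_add, Multiset.sum_replicate, smul_eq_mul] at this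
        exact this
      have hbig : ((p.parts.filter (fun x => k + 1 ≤ x)).map (· - k)).sum +
          Multiset.card (p.parts.filter (fun x => k + 1 ≤ x)) * k =
          (p.parts.filter (fun x => k + 1 ≤ x)).sum :=
        msum_map_sub _ k (fun x hx => by
          have := (Multiset.mem_filter.mp hx).2
          omega)
      have htot : (p.parts.filter (fun x => k + 1 ≤ x)).sum +
          (p.parts.filter (fun x => ¬ (k + 1 ≤ x))).sum = n := by
        have := congrArg Multiset.sum (Multiset.filter_add_not (fun x => k + 1 ≤ x) p.parts)
        rw [Multiset.sum_add, p.parts_sum] at this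
        exact this
      have hcardbig : Multiset.card (p.parts.filter (fun x => k + 1 ≤ x)) = t := by
        rw [htdef, mfun]
      rw [hcardbig] at hbig
      have hsq : (k - t) * k + t * k = k * k := by
        rw [← add_mul]
        congr 1
        omega
      have hk2 : k ^ 2 = k * k := pow_two k
      simp only [Finset.mem_sigma, Finset.HasAntidiagonal.mem_antidiagonal, Finset.mem_product,
        Finset.mem_filter, Finset.mem_univ, true_and]
      refine ⟨by omega, fun j hj => ?_, by rw [Multiset.card_map, hcardbig]; omega⟩
      have := (Multiset.mem_filter.mp (Multiset.mem_of_le tsub_le_self hj)).2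
      omega
    · -- backward membership
      intro x hx
      have hx' := Finset.mem_sigma.mp hx
      have hμ : ∀ j ∈ x.2.1.parts, j ≤ k :=
        (Finset.mem_filter.mp (Finset.mem_product.mp hx'.2).1).2
      have hν : Multiset.card x.2.2.parts ≤ k :=
        (Finset.mem_filter.mp (Finset.mem_product.mp hx'.2).2).2
      simp only [Finset.mem_filter, Finset.mem_univ, true_and]
      exact durfee_recomb k x.2.1.parts x.2.2.parts hμ
        (fun y hy => x.2.2.parts_pos hy) hν
    · -- left inverse
      intro p hp
      have hd : durfee p.parts = k := (Finset.mem_filter.mp hp).2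
      set t := mfun p.parts (k + 1) with htdef
      have ht : t ≤ k := by
        by_contra hc
        have := (le_durfee_iff p.parts (k + 1)).mpr (by omega)
        omega
      have hmk : k ≤ mfun p.parts k := (le_durfee_iff p.parts k).mp (le_of_eq hd.symm)
      have hrep := replicate_le_small p.parts k hmk
      apply Nat.Partition.ext
      simp only
      have hcard : Multiset.card ((p.parts.filter (fun x => k + 1 ≤ x)).map (· - k)) = t := by
        rw [Multiset.card_map, htdef, mfun]
      rw [hcard]
      have hmap : ((p.parts.filter (fun x => k + 1 ≤ x)).map (· - k)).map (· + k) =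
          p.parts.filter (fun x => k + 1 ≤ x) :=
        map_sub_add_cancel _ k (fun x hx => by
          have := (Multiset.mem_filter.mp hx).2
          omega)
      rw [hmap, ← add_assoc, tsub_add_cancel_of_le hrep, add_comm,
        Multiset.filter_add_not]
    · -- right inverse
      intro x hx
      obtain ⟨⟨a, b⟩, μ, ν⟩ := x
      have hx' := Finset.mem_sigma.mp hx
      have hμ : ∀ j ∈ μ.parts, j ≤ k :=
        (Finset.mem_filter.mp (Finset.mem_product.mp hx'.2).1).2
      have hν : Multiset.card ν.parts ≤ k :=
        (Finset.mem_filter.mp (Finset.mem_product.mp hx'.2).2).2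
      have hpos : ∀ y ∈ ν.parts, 0 < y := fun y hy => ν.parts_pos hy
      have hsmall := filter_recomb_small k (k - Multiset.card ν.parts) μ.parts ν.parts hμ hpos
      have hbig := filter_recomb_big k (k - Multiset.card ν.parts) μ.parts ν.parts hμ hpos
      have hmfun : mfun (μ.parts + (Multiset.replicate (k - Multiset.card ν.parts) k +
          ν.parts.map (· + k))) (k + 1) = Multiset.card ν.parts := by
        rw [mfun, hbig, Multiset.card_map]
      apply sigma_pair_eq
      · simp only
        rw [hsmall, hmfun, add_tsub_cancel_right]
      · simp only
        rw [hbig, map_add_sub_cancel]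
  · rw [if_neg hkn, Finset.card_eq_zero.mpr]
    apply Finset.filter_eq_empty_iff.mpr
    intro p _ hd
    apply hkn
    have := durfee_sq_le_sum p.parts
    rw [hd, p.parts_sum] at this
    exact this

theorem main_identity (n : ℕ) :
    coeff n (∑ k ∈ range (n + 1), X ^ (k ^ 2) * (PP α k) ^ 2) =
      (Fintype.card n.Partition : α) := by
  rw [map_sum]
  have h1 : ∀ k ∈ range (n + 1),
      coeff n (X ^ (k ^ 2) * (PP α k) ^ 2) =
      if k ^ 2 ≤ n then ((∑ ab ∈ antidiagonal (n - k ^ 2),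
        Acard k ab.1 * Bcard k ab.2 : ℕ) : α) else 0 := by
    intro k _
    rw [PowerSeries.coeff_X_pow_mul']
    split_ifs with h
    · rw [sq (PP α k), PowerSeries.coeff_mul, Nat.cast_sum]
      refine Finset.sum_congr rfl fun ab _ => ?_
      rw [coeff_PP, coeff_PP, Acard_eq_Bcard k ab.2, Nat.cast_mul]
    · rfl
  rw [Finset.sum_congr rfl h1, card_partition_durfee n]
  rw [Nat.cast_sum]
  refine Finset.sum_congr rfl fun k _ => ?_
  split_ifs <;> simp

end MockAux

open MockAux

theorem constantCoeff_qPoch_neg_X (k : ℕ) :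
    constantCoeff (qPoch (-X) X k) = 1 := by
  rw [qPoch, map_prod]
  refine Finset.prod_eq_one fun j _ => ?_
  simp [constantCoeff_X]

theorem constantCoeff_qPoch_neg_X2 (k : ℕ) :
    constantCoeff (qPoch (-(X ^ 2)) (X ^ 2) k) = 1 := by
  rw [qPoch, map_prod]
  refine Finset.prod_eq_one fun j _ => ?_
  simp [constantCoeff_X, ← pow_mul]

theorem coeff_psSum (f : ℕ → PowerSeries ℤ) (n : ℕ)
    (h : ∀ k, n < k → coeff n (f k) = 0) :
    coeff n (psSum f) = ∑ k ∈ range (n + 1), coeff n (f k) := by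
  rw [psSum, coeff_mk]
  exact tsum_eq_sum fun k hk => h k (by simpa using hk)

theorem coeff_psDiv_X_pow (g : PowerSeries ℤ) (n k : ℕ) (h : n < k) :
    coeff n (psDiv (X ^ (k ^ 2)) g) = 0 := by
  rw [psDiv, PowerSeries.coeff_X_pow_mul', if_neg]
  intro hle
  nlinarith [hle, h]

theorem map_qPoch_negX_sq (m : ℕ) [NeZero m] (h4 : (4 : ZMod m) = 0) (k : ℕ) :
    (PowerSeries.map (Int.castRingHom (ZMod m)) ((qPoch (-X) X k) ^ 2)) =
      (∏ j ∈ range k, (1 - X ^ (j + 1) : PowerSeries (ZMod m))) ^ 2 := by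
  have hps : (4 : PowerSeries (ZMod m)) = 0 := by
    rw [show (4 : PowerSeries (ZMod m)) = C 4 from (map_ofNat (C) 4).symm,
      h4, map_zero]
  rw [map_pow, qPoch, map_prod, ← prod_pow, ← prod_pow]
  refine Finset.prod_congr rfl fun j _ => ?_
  have : PowerSeries.map (Int.castRingHom (ZMod m)) (1 - -X * X ^ j) =
      1 + X ^ (j + 1) := by
    simp only [map_sub, map_mul, map_neg, map_one, map_pow, PowerSeries.map_X]
    ring
  rw [this]
  linear_combination (X ^ (j + 1) : PowerSeries (ZMod m)) * hps

theorem map_qPoch_negX2 (k : ℕ) :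
    (PowerSeries.map (Int.castRingHom (ZMod 2)) (qPoch (-(X ^ 2)) (X ^ 2) k)) =
      (∏ j ∈ range k, (1 - X ^ (j + 1) : PowerSeries (ZMod 2))) ^ 2 := by
  have hps : (2 : PowerSeries (ZMod 2)) = 0 := by
    rw [show (2 : PowerSeries (ZMod 2)) = C 2 from (map_ofNat (C) 2).symm,
      show (2 : ZMod 2) = 0 from rfl, map_zero]
  rw [qPoch, map_prod, ← prod_pow]
  refine Finset.prod_congr rfl fun j _ => ?_
  have : PowerSeries.map (Int.castRingHom (ZMod 2)) (1 - -X ^ 2 * (X ^ 2) ^ j) =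
      1 + X ^ 2 * (X ^ 2) ^ j := by
    simp only [map_sub, map_mul, map_neg, map_one, map_pow, PowerSeries.map_X]
    ring
  rw [this]
  linear_combination (X ^ (j + 1) : PowerSeries (ZMod 2)) * hps

theorem eq_of_mul_eq_one' {α : Type*} [CommRing α] {g a b : α}
    (ha : g * a = 1) (hb : g * b = 1) : a = b := by
  calc a = a * (g * b) := by rw [hb, mul_one]
    _ = b * (g * a) := by ring
    _ = b := by rw [ha, mul_one]

theorem key_congr (m : ℕ) [NeZero m] (g : ℕ → PowerSeries ℤ)
    (hcc : ∀ k, constantCoeff (g k) = 1)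
    (hmap : ∀ k, PowerSeries.map (Int.castRingHom (ZMod m)) (g k) =
      (∏ j ∈ range k, (1 - X ^ (j + 1) : PowerSeries (ZMod m))) ^ 2) (n : ℕ) :
    ((coeff n (psSum fun k => psDiv (X ^ (k ^ 2)) (g k)) : ℤ) : ZMod m) =
      ((Fintype.card (Nat.Partition n) : ℤ) : ZMod m) := by
  set π := Int.castRingHom (ZMod m)
  rw [coeff_psSum _ n (fun k hk => coeff_psDiv_X_pow (g k) n k hk)]
  push_cast
  have step : ∀ k, ((coeff n (psDiv (X ^ (k ^ 2)) (g k)) : ℤ) : ZMod m) =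
      coeff n (X ^ (k ^ 2) * (PP (ZMod m) k) ^ 2) := by
    intro k
    have h1 : (PowerSeries.map π (g k)) * (PowerSeries.map π (invOfUnit (g k) 1)) = 1 := by
      rw [← map_mul, PowerSeries.mul_invOfUnit (g k) 1 (by simpa using hcc k), map_one]
    have h2 : (PowerSeries.map π (g k)) * ((PP (ZMod m) k) ^ 2) = 1 := by
      rw [hmap k, ← mul_pow, pochX_mul_PP, one_pow]
    have h3 : PowerSeries.map π (invOfUnit (g k) 1) = (PP (ZMod m) k) ^ 2 :=
      eq_of_mul_eq_one' h1 h2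
    have hcast : ((coeff n (psDiv (X ^ (k ^ 2)) (g k)) : ℤ) : ZMod m) =
        coeff n (PowerSeries.map π (psDiv (X ^ (k ^ 2)) (g k))) := by
      rw [PowerSeries.coeff_map]; rfl
    rw [hcast, psDiv, map_mul, h3]
    congr 1
    rw [map_pow, PowerSeries.map_X]
  rw [Finset.sum_congr rfl (fun k _ => step k), ← map_sum, main_identity]

/-- For every `n ≥ 0`, `c(f⁽³⁾;n) ≡ p(n) (mod 4)` and `c(φ⁽³⁾;n) ≡ p(n) (mod 2)`,
where `p(n)` is the number of partitions of `n`. -/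
theorem mockF3_mockPhi3_partition (n : ℕ) :
    PowerSeries.coeff n mockF3 ≡ (Fintype.card (Nat.Partition n) : ℤ) [ZMOD 4] ∧
    PowerSeries.coeff n mockPhi3 ≡ (Fintype.card (Nat.Partition n) : ℤ) [ZMOD 2] := by
  constructor
  · have h := key_congr 4 (fun k => (qPoch (-X) X k) ^ 2)
      (fun k => by rw [map_pow, constantCoeff_qPoch_neg_X, one_pow])
      (fun k => map_qPoch_negX_sq 4 rfl k) n
    have := (ZMod.intCast_eq_intCast_iff _ _ _).mp h
    simpa [mockF3] using this
  · have h := key_congr 2 (fun k => qPoch (-(X ^ 2)) (X ^ 2) k)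
      (fun k => constantCoeff_qPoch_neg_X2 k)
      (fun k => map_qPoch_negX2 k) n
    have := (ZMod.intCast_eq_intCast_iff _ _ _).mp h
    simpa [mockPhi3] using this
end
end

section
/- For every integer n ≥ 0, the coefficient c(ν⁽³⁾;n) is odd if and only if 3n + 1 = k² for some integer k. Moreover, for every N ∈ ℕ, #{0 ≤ n ≤ N : c(ν⁽³⁾;n) is odd} = ⌊√(3N+1)⌋ − ⌊√(3N+1)/3⌋. -/
open PowerSeries Finset
open scoped Classical

noncomputable section

/-- The third order mock theta function `ν⁽³⁾(q) = ∑_{n≥0} q^{n(n+1)} / (−q;q²)_{n+1}`. -/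
def mockNu3 : PowerSeries ℤ :=
  psSum fun n => psDiv (X ^ (n * (n + 1))) (qPoch (-X) (X ^ 2) (n + 1))

/-! ### Auxiliary development over `ZMod 2` -/

local notation "R2" => PowerSeries (ZMod 2)

lemma two_eq_zero_R2 : (2 : R2) = 0 := by
  have h : ((1:R2)+1) = C (1+1 : ZMod 2) := by rw [map_add, map_one]
  rw [one_add_one_eq_two] at h
  rw [h, show (1+1 : ZMod 2) = 0 by decide, map_zero]

lemma neg_eq_R2 (a : R2) : -a = a := by
  have : (2 : R2) * a = 0 := by rw [two_eq_zero_R2, zero_mul]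
  linear_combination -this

/-- coefficientwise sum of a family of power series over `ZMod 2`. -/
def hsum (f : ℕ → R2) : R2 :=
  PowerSeries.mk fun N => ∑ n ∈ Finset.range (N+1), PowerSeries.coeff N (f n)

lemma coeff_hsum (f : ℕ → R2) (N : ℕ) :
    coeff N (hsum f) = ∑ n ∈ Finset.range (N+1), coeff N (f n) :=
  coeff_mk _ _

lemma hsum_mul (g : R2) (f : ℕ → R2) (hf : ∀ n N, N < n → coeff N (f n) = 0) :
    g * hsum f = hsum fun n => g * f n := by
  ext N
  rw [coeff_mul, coeff_hsum]
  have step : ∀ p ∈ Finset.HasAntidiagonal.antidiagonal N,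
      coeff p.1 g * coeff p.2 (hsum f)
      = ∑ n ∈ Finset.range (N+1), coeff p.1 g * coeff p.2 (f n) := by
    intro p hp
    have hp2 := Finset.HasAntidiagonal.mem_antidiagonal.1 hp
    rw [coeff_hsum, Finset.mul_sum]
    apply Finset.sum_subset
    · intro x hx
      rw [Finset.mem_range] at hx ⊢
      omega
    · intro x _ hnx
      rw [Finset.mem_range, not_lt] at hnx
      rw [hf x p.2 (by omega), mul_zero]
  rw [Finset.sum_congr rfl step, Finset.sum_comm]
  apply Finset.sum_congr rfl
  intro n _
  rw [coeff_mul]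

lemma hsum_succ (f : ℕ → R2) (hf : ∀ n N, N < n → coeff N (f n) = 0) :
    hsum f = f 0 + hsum fun n => f (n+1) := by
  ext N
  rw [map_add, coeff_hsum, coeff_hsum]
  rw [Finset.sum_range_succ' (fun n => coeff N (f n)) N]
  rw [Finset.sum_range_succ (fun n => coeff N (f (n+1))) N]
  rw [hf (N+1) N (by omega)]
  ring

/-- `P_k = ∏_{j<k} (1+X^{2j+1})`. -/
def Pden (k : ℕ) : R2 := ∏ j ∈ Finset.range k, (1 + X ^ (2*j+1))

/-- denominators for the `h` family. -/
def Qden (k n : ℕ) : R2 := ∏ j ∈ Finset.range (n+1), (1 + X ^ (2*j+2*k+1))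

lemma constCoeff_one_add_X_pow (m : ℕ) (hm : m ≠ 0) :
    constantCoeff (1 + X^m : R2) = 1 := by
  simp [map_add, map_pow, constantCoeff_X, zero_pow hm]

lemma constCoeff_Qden (k n : ℕ) : constantCoeff (Qden k n) = 1 := by
  rw [Qden, map_prod]
  apply Finset.prod_eq_one
  intro j _
  exact constCoeff_one_add_X_pow _ (by omega)

lemma invUnique2 {a x y : R2} (hx : a * x = 1) (hy : a * y = 1) : x = y := by
  calc x = x * (a * y) := by rw [hy, mul_one]
    _ = (a * x) * y := by ring
    _ = y := by rw [hx, one_mul]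

lemma mul_invOfUnit_eq_one {a : R2} (ha : constantCoeff a = 1) :
    a * invOfUnit a 1 = 1 :=
  mul_invOfUnit a 1 (by simpa using ha)

lemma mul_cancel_invOfUnit {b c : R2} (hb : constantCoeff b = 1)
    (hc : constantCoeff c = 1) :
    b * invOfUnit (b*c) 1 = invOfUnit c 1 := by
  have h1 : c * (b * invOfUnit (b*c) 1) = 1 := by
    rw [← mul_assoc, mul_comm c b]
    exact mul_invOfUnit_eq_one (by rw [map_mul, hb, hc, one_mul])
  exact invUnique2 h1 (mul_invOfUnit_eq_one hc)

/-- terms of the `h` family. -/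
def hterm (k n : ℕ) : R2 := X^(n*n+(2*k+1)*n) * invOfUnit (Qden k n) 1

/-- `h_k = ∑_n X^{n²+(2k+1)n} / ∏_{j≤n} (1+X^{2j+2k+1})`. -/
def hh (k : ℕ) : R2 := hsum (hterm k)

lemma hterm_ord (k n N : ℕ) (h : N < n) : coeff N (hterm k n) = 0 := by
  rw [hterm, coeff_X_pow_mul']
  rw [if_neg]
  intro hle
  nlinarith

lemma hterm_zero (k : ℕ) : (1 + X^(2*k+1)) * hterm k 0 = 1 := by
  have hq : Qden k 0 = 1 + X^(2*k+1) := by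
    rw [Qden, Finset.prod_range_one]
    norm_num
  rw [hterm, ← hq]
  simp only [Nat.mul_zero, Nat.zero_mul, mul_zero, add_zero, pow_zero, one_mul]
  exact mul_invOfUnit_eq_one (constCoeff_Qden k 0)

lemma hterm_succ (k n : ℕ) :
    (1 + X^(2*k+1)) * hterm k (n+1) = X^(2*k+2) * hterm (k+1) n := by
  have hq : Qden k (n+1) = (1 + X^(2*k+1)) * Qden (k+1) n := by
    rw [Qden, Finset.prod_range_succ', Qden]
    rw [show 2*0+2*k+1 = 2*k+1 by ring]
    rw [mul_comm]
    congr 1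
    apply Finset.prod_congr rfl
    intro j _
    congr 2
    ring
  rw [hterm, hterm, hq]
  have hc : (1 + (X:R2)^(2*k+1)) * invOfUnit ((1 + X^(2*k+1)) * Qden (k+1) n) 1
      = invOfUnit (Qden (k+1) n) 1 := by
    exact mul_cancel_invOfUnit (constCoeff_one_add_X_pow _ (by omega)) (constCoeff_Qden _ _)
  calc (1 + (X:R2)^(2*k+1)) * (X^((n+1)*(n+1)+(2*k+1)*(n+1))
          * invOfUnit ((1 + X^(2*k+1)) * Qden (k+1) n) 1)
      = X^((n+1)*(n+1)+(2*k+1)*(n+1)) *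
        ((1 + X^(2*k+1)) * invOfUnit ((1 + X^(2*k+1)) * Qden (k+1) n) 1) := by ring
    _ = X^((n+1)*(n+1)+(2*k+1)*(n+1)) * invOfUnit (Qden (k+1) n) 1 := by rw [hc]
    _ = X^(2*k+2) * (X^(n*n+(2*(k+1)+1)*n) * invOfUnit (Qden (k+1) n) 1) := by
        rw [← mul_assoc, ← pow_add]
        congr 2
        ring

lemma hh_rec (k : ℕ) : (1 + X^(2*k+1)) * hh k = 1 + X^(2*k+2) * hh (k+1) := by
  rw [hh, hsum_mul _ _ (hterm_ord k)]
  rw [hsum_succ _ (fun n N h => by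
    rw [show ((1 + X^(2*k+1)) * hterm k n : R2)
        = hterm k n + X^(2*k+1) * hterm k n by ring]
    rw [map_add, hterm_ord k n N h, coeff_X_pow_mul', zero_add]
    split
    · exact hterm_ord k n _ (by omega)
    · rfl)]
  rw [hterm_zero]
  congr 1
  have : (fun n => (1 + X^(2*k+1)) * hterm k (n+1)) = fun n => X^(2*k+2) * hterm (k+1) n := by
    funext n; exact hterm_succ k n
  rw [this, ← hsum_mul _ _ (hterm_ord (k+1)), hh]

/-- partial theta `u_c = ∑_{m≥0} X^{3m²+cm}`. -/
def uu (c : ℕ) : R2 :=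
  PowerSeries.mk fun N => if ∃ m : ℕ, N = 3*m*m + c*m then 1 else 0

lemma uu_shift (c : ℕ) : uu c = 1 + X^(c+3) * uu (c+6) := by
  ext N
  rw [uu, coeff_mk, map_add, coeff_X_pow_mul']
  rcases Nat.eq_zero_or_pos N with h0 | hpos
  · subst h0
    rw [if_pos ⟨0, by ring⟩]
    rw [if_neg (by omega)]
    simp
  · have hone : coeff N (1 : R2) = 0 := by
      rw [coeff_one, if_neg (by omega)]
    rw [hone, zero_add]
    by_cases hle : c + 3 ≤ N
    · rw [if_pos hle, uu, coeff_mk]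
      congr 1
      · apply propext
        constructor
        · rintro ⟨m, hm⟩
          rcases m with _ | m'
          · omega
          · refine ⟨m', ?_⟩
            have : 3*(m'+1)*(m'+1) + c*(m'+1) = (3*m'*m' + (c+6)*m') + (c+3) := by ring
            omega
        · rintro ⟨m', hm⟩
          refine ⟨m'+1, ?_⟩
          have : 3*(m'+1)*(m'+1) + c*(m'+1) = (3*m'*m' + (c+6)*m') + (c+3) := by ring
          omega
    · rw [if_neg hle, if_neg]
      rintro ⟨m, hm⟩
      rcases m with _ | m'
      · omega
      · have : 3*(m'+1)*(m'+1) + c*(m'+1) = (3*m'*m' + (c+6)*m') + (c+3) := by ring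
        omega

/-- `E_k = ∑_{n<k} X^{(2k+1)n} P_n`. -/
def Ek (k : ℕ) : R2 := ∑ n ∈ Finset.range k, X^((2*k+1)*n) * Pden n

/-- the explicit (false-theta) family `g_k`. -/
def gg (k : ℕ) : R2 :=
  Ek k + X^(2*k*k+k) * Pden k * (uu (6*k+2) + X^(2*k+1) * uu (6*k+4))

lemma Pden_succ (n : ℕ) : Pden (n+1) = Pden n + X^(2*n+1) * Pden n := by
  rw [Pden, Finset.prod_range_succ, ← Pden]
  ring

/-- The key polynomial identity `(★)`. -/
lemma starId (k : ℕ) :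
    (1 + X^(2*k+1)) * (Ek k + X^((2*k+1)*k) * Pden (k+1)) = 1 + X^(2*k+2) * Ek (k+1) := by
  have hcalc : X^(2*k+2) * Ek (k+1)
      = ∑ n ∈ Finset.range (k+1),
          (X^((2*k+1)*(n+1)) * Pden (n+1) + X^((2*k+1)*(n+1)) * Pden n) := by
    rw [Ek, Finset.mul_sum]
    apply Finset.sum_congr rfl
    intro n _
    rw [Pden_succ n]
    linear_combination (-(X^((2*k+1)*(n+1)) * Pden n)) * two_eq_zero_R2
  rw [Finset.sum_add_distrib] at hcalc
  have h1 : (∑ n ∈ Finset.range (k+1), X^((2*k+1)*(n+1)) * Pden (n+1))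
      + X^((2*k+1)*0) * Pden 0
      = ∑ m ∈ Finset.range (k+2), X^((2*k+1)*m) * Pden m :=
    (Finset.sum_range_succ' (fun m => X^((2*k+1)*m) * Pden m) (k+1)).symm
  have h2 : ∑ m ∈ Finset.range (k+2), X^((2*k+1)*m) * Pden m
      = Ek k + X^((2*k+1)*k) * Pden k + X^((2*k+1)*(k+1)) * Pden (k+1) := by
    rw [Finset.sum_range_succ, Finset.sum_range_succ, Ek]
  have h3 : ∑ n ∈ Finset.range (k+1), X^((2*k+1)*(n+1)) * Pden n
      = X^(2*k+1) * (Ek k + X^((2*k+1)*k) * Pden k) := by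
    have : ∀ n ∈ Finset.range (k+1), X^((2*k+1)*(n+1)) * Pden n
        = X^(2*k+1) * (X^((2*k+1)*n) * Pden n) := by
      intro n _
      rw [← mul_assoc, ← pow_add]
      congr 2
      ring
    rw [Finset.sum_congr rfl this, ← Finset.mul_sum, Finset.sum_range_succ, Ek]
  have h4 : (X:R2)^((2*k+1)*0) * Pden 0 = 1 := by
    simp [Pden]
  linear_combination -hcalc - h1 - h2 - h3 + h4 + (X^((2*k+1)*k)) * (Pden_succ k)

lemma gg_rec (k : ℕ) : (1 + X^(2*k+1)) * gg k = 1 + X^(2*k+2) * gg (k+1) := by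
  have hstar := starId k
  rw [Pden_succ k] at hstar
  simp only [gg]
  rw [show 6*(k+1)+2 = 6*k+2+6 by ring, show 6*(k+1)+4 = 6*k+4+6 by ring,
    uu_shift (6*k+2), uu_shift (6*k+4), Pden_succ k]
  linear_combination hstar

/-- the difference family. -/
def dd (k : ℕ) : R2 := hh k + gg k

lemma dd_rec (k : ℕ) : X^(2*k+2) * dd (k+1) = (1 + X^(2*k+1)) * dd k := by
  have h1 := hh_rec k
  have h2 := gg_rec k
  have h3 := two_eq_zero_R2
  rw [dd, dd]
  linear_combination -h1 - h2 - h3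

lemma Pden_dd (k : ℕ) : Pden k * dd 0 = X^(k*k+k) * dd k := by
  induction k with
  | zero => simp [Pden]
  | succ k ih =>
    have h1 := dd_rec k
    have h2 : Pden (k+1) = Pden k + X^(2*k+1) * Pden k := Pden_succ k
    have : Pden (k+1) * dd 0 = (1 + X^(2*k+1)) * (Pden k * dd 0) := by
      rw [h2]; ring
    rw [this, ih]
    calc (1 + X^(2*k+1)) * (X^(k*k+k) * dd k)
        = X^(k*k+k) * ((1 + X^(2*k+1)) * dd k) := by ring
      _ = X^(k*k+k) * (X^(2*k+2) * dd (k+1)) := by rw [← h1]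
      _ = X^((k+1)*(k+1)+(k+1)) * dd (k+1) := by
          rw [← mul_assoc, ← pow_add]; congr 2; ring

lemma dd_zero : dd 0 = 0 := by
  ext N
  induction N using Nat.strong_induction_on with
  | _ N ih =>
    have key : coeff N (Pden (N+1) * dd 0) = 0 := by
      rw [Pden_dd (N+1), coeff_X_pow_mul', if_neg (by nlinarith)]
    rw [coeff_mul] at key
    rw [Finset.sum_eq_single (0, N)] at key
    · rw [show coeff (0,N).1 (Pden (N+1)) = 1 by
        rw [coeff_zero_eq_constantCoeff]
        rw [Pden, map_prod]
        apply Finset.prod_eq_one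
        intro j _
        exact constCoeff_one_add_X_pow _ (by omega), one_mul] at key
      simpa using key
    · rintro ⟨i, j⟩ hmem hne
      rw [Finset.HasAntidiagonal.mem_antidiagonal] at hmem
      have hj : j < N := by
        rcases Nat.lt_or_ge j N with h | h
        · exact h
        · exfalso; apply hne; have : j = N := by omega
          subst this; have : i = 0 := by omega
          subst this; rfl
      rw [ih j hj]
      simp
    · intro h
      exfalso
      exact h (Finset.HasAntidiagonal.mem_antidiagonal.2 (by omega))

lemma hh_eq_gg : hh 0 = gg 0 := by
  have h := dd_zero
  rw [dd] at h
  have h3 := two_eq_zero_R2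
  linear_combination h - h3 * gg 0

/-! ### Transfer from `ℤ⟦X⟧` -/

/-- reduction mod 2 of integer power series -/
def M2 : PowerSeries ℤ →+* R2 := PowerSeries.map (Int.castRingHom (ZMod 2))

lemma map_invOfUnit_M2 (f : PowerSeries ℤ) (hf : constantCoeff f = 1) :
    M2 (invOfUnit f 1) = invOfUnit (M2 f) 1 := by
  have hmf : constantCoeff (M2 f) = 1 := by
    have : constantCoeff (M2 f)
        = (Int.castRingHom (ZMod 2)) (constantCoeff f) := by
      rw [M2, ← coeff_zero_eq_constantCoeff, ← coeff_zero_eq_constantCoeff, coeff_map]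
    rw [this, hf, map_one]
  apply invUnique2 (a := M2 f)
  · rw [← map_mul, PowerSeries.mul_invOfUnit f 1 (by simpa using hf), map_one]
  · exact mul_invOfUnit_eq_one hmf

lemma constCoeff_qPoch (n : ℕ) : constantCoeff (qPoch (-X) (X^2) (n+1)) = 1 := by
  rw [qPoch, map_prod]
  apply Finset.prod_eq_one
  intro j _
  have : (1 : PowerSeries ℤ) - (-X) * (X^2)^j = 1 + X^(2*j+1) := by ring
  rw [this, map_add, map_one, map_pow, constantCoeff_X, zero_pow (by omega : 2*j+1 ≠ 0), add_zero]

lemma M2_qPoch (n : ℕ) : M2 (qPoch (-X) (X^2) (n+1)) = Qden 0 n := by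
  rw [qPoch, Qden, map_prod]
  apply Finset.prod_congr rfl
  intro j _
  have h1 : (1 : PowerSeries ℤ) - (-X) * (X^2)^j = 1 + X^(2*j+1) := by ring
  rw [h1, map_add, map_one, map_pow, show M2 X = (X : R2) from PowerSeries.map_X _]

lemma coeff_mockNu3 (N : ℕ) : coeff N mockNu3 =
    ∑ k ∈ Finset.range (N+1), coeff N (psDiv (X ^ (k * (k + 1))) (qPoch (-X) (X ^ 2) (k + 1))) := by
  rw [mockNu3, psSum, coeff_mk]
  apply tsum_eq_sum
  intro k hk
  rw [Finset.mem_range, not_lt] at hk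
  rw [psDiv, coeff_X_pow_mul', if_neg (by nlinarith)]

lemma M2_mockNu3 : M2 mockNu3 = hh 0 := by
  ext N
  rw [hh, coeff_hsum]
  rw [M2, coeff_map, coeff_mockNu3, Int.coe_castRingHom]
  push_cast
  apply Finset.sum_congr rfl
  intro k _
  rw [psDiv]
  have : ((coeff (R := ℤ) N) (X ^ (k*(k+1)) * invOfUnit (qPoch (-X) (X^2) (k+1)) 1) : ZMod 2)
      = coeff N (M2 (X ^ (k*(k+1)) * invOfUnit (qPoch (-X) (X^2) (k+1)) 1)) := by
    rw [M2, coeff_map]; rfl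
  rw [this, map_mul, map_pow, show M2 X = (X : R2) from PowerSeries.map_X _]
  rw [map_invOfUnit_M2 _ (constCoeff_qPoch k), M2_qPoch]
  rw [hterm]
  congr 2
  ring

/-! ### identification of the coefficients of `gg 0` -/

lemma gg_zero_eq : gg 0 = uu 2 + X^1 * uu 4 := by
  rw [gg, Ek]
  simp [Pden]

lemma exists_nat_sq (N : ℕ) (h : ∃ k : ℤ, (3 * N + 1 : ℤ) = k ^ 2) :
    ∃ j : ℕ, j * j = 3 * N + 1 := by
  obtain ⟨k, hk⟩ := h
  refine ⟨k.natAbs, ?_⟩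
  have h2 : ((k.natAbs * k.natAbs : ℕ) : ℤ) = (3 * N + 1 : ℤ) := by
    rw [Int.natAbs_mul_self]
    linear_combination -hk
  exact_mod_cast h2

lemma sq_to_cases (N : ℕ) (h : ∃ k : ℤ, (3 * N + 1 : ℤ) = k ^ 2) :
    (∃ m : ℕ, N = 3*m*m+2*m) ∨ (1 ≤ N ∧ ∃ m : ℕ, N - 1 = 3*m*m+4*m) := by
  obtain ⟨j, hj⟩ := exists_nat_sq N h
  have hmod := Nat.div_add_mod j 3
  have hlt : j % 3 < 3 := Nat.mod_lt _ (by norm_num)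
  set t := j / 3 with ht
  have : j % 3 = 0 ∨ j % 3 = 1 ∨ j % 3 = 2 := by omega
  rcases this with h0 | h1 | h2
  · exfalso
    have hj3 : j = 3*t := by omega
    rw [hj3] at hj
    have : 3*t*(3*t) = 9*(t*t) := by ring
    omega
  · left
    have hj3 : j = 3*t+1 := by omega
    rw [hj3] at hj
    have : (3*t+1)*(3*t+1) = 3*(3*t*t+2*t)+1 := by ring
    exact ⟨t, by omega⟩
  · right
    have hj3 : j = 3*t+2 := by omega
    rw [hj3] at hj
    have : (3*t+2)*(3*t+2) = 3*(3*t*t+4*t+1)+1 := by ring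
    exact ⟨by omega, t, by omega⟩

lemma case1_to_sq (N m : ℕ) (h : N = 3*m*m+2*m) : ∃ k : ℤ, (3 * N + 1 : ℤ) = k ^ 2 := by
  refine ⟨3*m+1, ?_⟩
  subst h
  push_cast
  ring

lemma case2_to_sq (N m : ℕ) (h1 : 1 ≤ N) (h : N - 1 = 3*m*m+4*m) :
    ∃ k : ℤ, (3 * N + 1 : ℤ) = k ^ 2 := by
  refine ⟨3*m+2, ?_⟩
  have hN : N = 3*m*m+4*m+1 := by omega
  subst hN
  push_cast
  ring

lemma cases_disjoint (N m m' : ℕ) (h1 : N = 3*m*m+2*m) (hN : 1 ≤ N)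
    (h2 : N - 1 = 3*m'*m'+4*m') : False := by
  have e : 3*m*m+2*m = 3*m'*m'+4*m'+1 := by omega
  have e1 : (3*m+1)*(3*m+1) = 3*(3*m*m+2*m)+1 := by ring
  have e2 : (3*m'+2)*(3*m'+2) = 3*(3*m'*m'+4*m'+1)+1 := by ring
  have e3 : (3*m+1)*(3*m+1) = (3*m'+2)*(3*m'+2) := by omega
  have := Nat.mul_self_inj.mp e3
  omega

lemma coeff_gg_zero (N : ℕ) :
    coeff N (gg 0) = 1 ↔ ∃ k : ℤ, (3 * N + 1 : ℤ) = k ^ 2 := by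
  rw [gg_zero_eq, map_add, coeff_X_pow_mul']
  simp only [uu, coeff_mk]
  by_cases h1 : ∃ m : ℕ, N = 3*m*m+2*m
  · rw [if_pos h1]
    obtain ⟨m, hm⟩ := h1
    have hzero : (if 1 ≤ N then (if ∃ m', N - 1 = 3*m'*m'+4*m' then (1 : ZMod 2) else 0) else 0)
        = 0 := by
      split
      · rw [if_neg]
        rintro ⟨m', hm'⟩
        exact cases_disjoint N m m' hm (by assumption) hm'
      · rfl
    rw [hzero, add_zero]
    exact iff_of_true rfl (case1_to_sq N m hm)
  · rw [if_neg h1, zero_add]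
    by_cases h2 : 1 ≤ N
    · rw [if_pos h2]
      by_cases h3 : ∃ m' : ℕ, N - 1 = 3*m'*m'+4*m'
      · rw [if_pos h3]
        obtain ⟨m', hm'⟩ := h3
        exact iff_of_true rfl (case2_to_sq N m' h2 hm')
      · rw [if_neg h3]
        refine iff_of_false (by decide) ?_
        intro hsq
        rcases sq_to_cases N hsq with h | h
        · exact h1 h
        · exact h3 h.2
    · rw [if_neg h2]
      refine iff_of_false (by decide) ?_
      intro hsq
      rcases sq_to_cases N hsq with h | h
      · exact h1 h
      · exact h2 h.1

lemma odd_iff_cast_eq_one (z : ℤ) : Odd z ↔ (z : ZMod 2) = 1 := by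
  rw [Int.odd_iff]
  rw [show ((z : ZMod 2) = 1) ↔ ¬ ((z : ZMod 2) = 0) from by
    generalize (z : ZMod 2) = x; revert x; decide]
  rw [ZMod.intCast_zmod_eq_zero_iff_dvd, Int.dvd_iff_emod_eq_zero]
  omega

/-- the counting lemma. -/
lemma count_lemma (N : ℕ) :
    ((Finset.range (N+1)).filter (fun n : ℕ => ∃ k : ℤ, (3 * (n : ℤ) + 1 : ℤ) = k ^ 2)).card
      = Nat.sqrt (3*N+1) - Nat.sqrt (3*N+1) / 3 := by
  set K := Nat.sqrt (3*N+1) with hK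
  have hbij : ((Finset.range (N+1)).filter (fun n : ℕ => ∃ k : ℤ, (3 * (n : ℤ) + 1 : ℤ) = k ^ 2)).card
      = ((Finset.Ioc 0 K).filter (fun j => ¬ 3 ∣ j)).card := by
    apply Finset.card_bij (i := fun n _ => Nat.sqrt (3*n+1))
    · intro a ha
      rw [Finset.mem_filter, Finset.mem_range] at ha
      obtain ⟨haN, hsq⟩ := ha
      obtain ⟨j, hj⟩ := exists_nat_sq a hsq
      rw [show 3*a+1 = j*j by omega, Nat.sqrt_eq]
      rw [Finset.mem_filter, Finset.mem_Ioc]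
      refine ⟨⟨?_, ?_⟩, ?_⟩
      · rcases Nat.eq_zero_or_pos j with h0 | h
        · rw [h0] at hj; omega
        · exact h
      · rw [hK]
        have h1 : j = Nat.sqrt (j*j) := (Nat.sqrt_eq j).symm
        rw [h1]
        apply Nat.sqrt_le_sqrt
        omega
      · intro ⟨t, h3t⟩
        rw [h3t] at hj
        have : 3*t*(3*t) = 9*(t*t) := by ring
        omega
    · intro a1 ha1 a2 ha2 heq
      rw [Finset.mem_filter, Finset.mem_range] at ha1 ha2
      obtain ⟨j1, hj1⟩ := exists_nat_sq a1 ha1.2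
      obtain ⟨j2, hj2⟩ := exists_nat_sq a2 ha2.2
      rw [show 3*a1+1 = j1*j1 by omega, Nat.sqrt_eq] at heq
      rw [show 3*a2+1 = j2*j2 by omega, Nat.sqrt_eq] at heq
      subst heq
      omega
    · intro b hb
      rw [Finset.mem_filter, Finset.mem_Ioc] at hb
      obtain ⟨⟨hb0, hbK⟩, hb3⟩ := hb
      have hbb : b*b ≤ 3*N+1 := by
        calc b*b ≤ K*K := Nat.mul_le_mul hbK hbK
          _ ≤ 3*N+1 := Nat.sqrt_le _
      have hmod : b % 3 = 1 ∨ b % 3 = 2 := by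
        have := Nat.mod_lt b (show 0 < 3 by norm_num)
        rcases Nat.eq_zero_or_pos (b % 3) with h0 | h
        · exfalso; exact hb3 (Nat.dvd_of_mod_eq_zero h0)
        · omega
      have hex : ∃ a : ℕ, 3*a+1 = b*b := by
        have hd := Nat.div_add_mod b 3
        set t := b / 3
        rcases hmod with h1 | h2
        · have hb' : b = 3*t+1 := by omega
          refine ⟨3*t*t+2*t, ?_⟩
          rw [hb']
          ring
        · have hb' : b = 3*t+2 := by omega
          refine ⟨3*t*t+4*t+1, ?_⟩
          rw [hb']
          ring
      obtain ⟨a, hab⟩ := hex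
      have haN : a < N + 1 := by omega
      refine ⟨a, ?_, ?_⟩
      · rw [Finset.mem_filter, Finset.mem_range]
        refine ⟨haN, ⟨(b:ℤ), ?_⟩⟩
        have : ((3*a+1 : ℕ) : ℤ) = ((b*b : ℕ) : ℤ) := by exact_mod_cast hab
        push_cast at this
        linear_combination this
      · rw [show 3*a+1 = b*b by omega, Nat.sqrt_eq]
  rw [hbij, Finset.filter_not, Finset.card_sdiff_of_subset (Finset.filter_subset _ _),
    Nat.Ioc_filter_dvd_card_eq_div, Nat.card_Ioc]
  omega

/-! ### the main theorem -/

/-- `c(ν⁽³⁾;n)` is odd iff `3n + 1 = k²` for some integer `k`; moreover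
`#{0 ≤ n ≤ N : c(ν⁽³⁾;n) odd} = ⌊√(3N+1)⌋ − ⌊√(3N+1)/3⌋`. -/
theorem mockNu3_parity :
    (∀ n : ℕ, Odd (PowerSeries.coeff n mockNu3) ↔ ∃ k : ℤ, (3 * n + 1 : ℤ) = k ^ 2) ∧
    (∀ N : ℕ, ((Finset.range (N + 1)).filter
        (fun n => Odd (PowerSeries.coeff n mockNu3))).card =
      ⌊Real.sqrt (3 * N + 1)⌋₊ - ⌊Real.sqrt (3 * N + 1) / 3⌋₊) := by
  have part1 : ∀ n : ℕ, Odd (PowerSeries.coeff n mockNu3) ↔ ∃ k : ℤ, (3 * n + 1 : ℤ) = k ^ 2 := by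
    intro n
    have hodd : Odd (PowerSeries.coeff n mockNu3) ↔
        coeff n (M2 mockNu3) = 1 := by
      rw [M2, coeff_map, odd_iff_cast_eq_one]
      rfl
    rw [hodd, M2_mockNu3, hh_eq_gg]
    exact coeff_gg_zero n
  refine ⟨part1, ?_⟩
  intro N
  have hfil : (Finset.range (N + 1)).filter (fun n => Odd (PowerSeries.coeff n mockNu3))
      = (Finset.range (N+1)).filter (fun n : ℕ => ∃ k : ℤ, (3 * (n : ℤ) + 1 : ℤ) = k ^ 2) := by
    apply Finset.filter_congr
    intro x _
    exact part1 x
  rw [hfil, count_lemma N]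
  have hfloor1 : ⌊Real.sqrt (3 * N + 1)⌋₊ = Nat.sqrt (3*N+1) := by
    rw [show ((3:ℝ) * N + 1) = ((3*N+1 : ℕ) : ℝ) by push_cast; ring]
    exact Real.nat_floor_real_sqrt_eq_nat_sqrt
  have hfloor2 : ⌊Real.sqrt (3 * N + 1) / 3⌋₊ = Nat.sqrt (3*N+1) / 3 := by
    rw [show (Real.sqrt (3 * N + 1) / 3) = (Real.sqrt (3 * N + 1) / ((3:ℕ):ℝ)) by norm_num]
    rw [Nat.floor_div_natCast, hfloor1]
  rw [hfloor1, hfloor2]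
end
end
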